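/- arXiv:1406.3654 — 7 statements merged into one kernel-verified Lean document; each statement's English description precedes it below -/
import Mathlib

section
/- Let V ⊆ W be valued K-vector spaces with Γ(V)=Γ(W)=Γ(K). If a ∈ W \ V is such that val(a) ≥ val(a+v) for all v ∈ V (i.e., a is maximally close to 0 in its coset a+V), then the line K·a is perpendicular to V: for all v ∈ V and α ∈ K, val(v + α·a) = min(val(v), val(α·a)). -/
/- STATEMENT 1: If V ⊆ W are valued K-vector spaces with Γ(V)=Γ(W)=Γ(K) and
a ∈ W \ V is maximally close to 0 in its coset a + V, then the line K·a is
perpendicular to V: val(v + α·a) = min(val v, val (α·a)) for all v ∈ V, α ∈ K.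
(Valuations take values in WithTop Γ, with val x = ⊤ iff x = 0; larger valuation
means closer to 0.) -/
theorem stmt1 {K W Γ : Type*} [Field K] [AddCommGroup W] [Module K W]
    [AddCommGroup Γ] [LinearOrder Γ] [IsOrderedAddMonoid Γ]
    (valK : K → WithTop Γ)
    (hvalK0 : ∀ x : K, valK x = ⊤ ↔ x = 0)
    (hvalKmul : ∀ x y : K, valK (x * y) = valK x + valK y)
    (hvalKultra : ∀ x y : K, min (valK x) (valK y) ≤ valK (x + y))
    (valW : W → WithTop Γ)
    (hvalW0 : ∀ w : W, valW w = ⊤ ↔ w = 0)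
    (hultra : ∀ v w : W, min (valW v) (valW w) ≤ valW (v + w))
    (hsmul : ∀ (α : K) (w : W), valW (α • w) = valK α + valW w)
    (V : Submodule K W) (a : W) (ha : a ∉ V)
    (hmax : ∀ v ∈ V, valW (a + v) ≤ valW a) :
    ∀ v ∈ V, ∀ α : K, valW (v + α • a) = min (valW v) (valW (α • a)) := by
  -- valK 1 = 0
  have hK1ne : valK 1 ≠ ⊤ := by simp [hvalK0]
  have hK1 : valK (1 : K) = 0 := by
    have h := hvalKmul 1 1
    rw [one_mul] at h
    lift valK 1 to Γ using hK1ne with g hg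
    have hgg : g = g + g := by exact_mod_cast h
    have hg0 : g = 0 := by
      have h2 : g + 0 = g + g := by rw [add_zero]; exact hgg
      exact (add_left_cancel h2).symm
    exact_mod_cast congrArg (fun x : Γ => (x : WithTop Γ)) hg0
  -- valK (-1) = 0
  have hKneg1 : valK (-1 : K) = 0 := by
    have h := hvalKmul (-1) (-1)
    rw [neg_mul_neg, one_mul, hK1] at h
    have hne : valK (-1 : K) ≠ ⊤ := by
      intro ht; rw [ht] at h; simp at h
    lift valK (-1 : K) to Γ using hne with g hg
    have hgg : g + g = (0 : Γ) := by exact_mod_cast h.symm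
    have hg0 : g = 0 := by
      rcases lt_trichotomy g 0 with h' | h' | h'
      · have := add_lt_add h' h'
        rw [hgg, add_zero] at this
        exact absurd this (lt_irrefl 0)
      · exact h'
      · have := add_lt_add h' h'
        rw [hgg, add_zero] at this
        exact absurd this (lt_irrefl 0)
    exact_mod_cast congrArg (fun x : Γ => (x : WithTop Γ)) hg0
  -- valW (-w) = valW w
  have hneg : ∀ w : W, valW (-w) = valW w := by
    intro w
    have : (-w) = (-1 : K) • w := by simp
    rw [this, hsmul, hKneg1, zero_add]
  -- ultrametric equality when valuations differ
  have heq : ∀ v w : W, valW v < valW w → valW (v + w) = valW v := by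
    intro v w hlt
    refine le_antisymm ?_ ?_
    · have := hultra (v + w) (-w)
      rw [hneg, add_neg_cancel_right] at this
      rcases min_le_iff.mp this with h | h
      · exact h
      · exact absurd h (not_le.mpr hlt)
    · have := hultra v w
      rwa [min_eq_left hlt.le] at this
  intro v hv α
  rcases eq_or_ne α 0 with rfl | hα
  · have h0 : valW (0 : W) = ⊤ := (hvalW0 0).mpr rfl
    simp [h0]
  -- a ≠ 0
  have ha0 : a ≠ 0 := fun h => ha (h ▸ V.zero_mem)
  have hαne : valK α ≠ ⊤ := fun h => hα ((hvalK0 α).mp h)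
  have haW : valW a ≠ ⊤ := fun h => ha0 ((hvalW0 a).mp h)
  have hαinvne : valK α⁻¹ ≠ ⊤ := fun h => hα (by simpa using (hvalK0 α⁻¹).mp h)
  rcases lt_trichotomy (valW v) (valW (α • a)) with hlt | heq' | hgt
  · rw [heq v (α • a) hlt, min_eq_left hlt.le]
  · -- equal valuations: use maximality
    refine le_antisymm ?_ (hultra v (α • a))
    by_contra hcon
    push_neg at hcon
    rw [← heq', min_self] at hcon
    -- valW (a + α⁻¹ • v) = valK α⁻¹ + valW (v + α • a)
    have key : valW (a + α⁻¹ • v) = valK α⁻¹ + valW (v + α • a) := by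
      have : a + α⁻¹ • v = α⁻¹ • (v + α • a) := by
        rw [smul_add, smul_smul, inv_mul_cancel₀ hα, one_smul, add_comm]
      rw [this, hsmul]
    have hval_a : valW a = valK α⁻¹ + valW (α • a) := by
      rw [hsmul, ← add_assoc, ← hvalKmul, inv_mul_cancel₀ hα, hK1, zero_add]
    have hlt2 : valW a < valW (a + α⁻¹ • v) := by
      rw [key, hval_a]
      exact WithTop.add_lt_add_left hαinvne (heq' ▸ hcon)
    exact absurd (hmax (α⁻¹ • v) (V.smul_mem _ hv)) (not_le.mpr hlt2)
  · rw [add_comm, heq (α • a) v hgt, min_eq_right hgt.le]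
end

section
/- Let K be a spherically complete valued field and V an n-dimensional valued K-vector space with Γ(V) = Γ(K). Then V admits a separating basis: there exist v₁,…,vₙ ∈ V forming a K-basis such that val(x₁v₁ + ⋯ + xₙvₙ) = min₁≤i≤n val(xᵢ) for every (x₁,…,xₙ) ∈ Kⁿ. In other words, V is isomorphic as a valued vector space to K^{⊕n} with the minimum valuation. -/
/- STATEMENT 2: A finite-dimensional valued vector space with Γ(V) = Γ(K) over a
spherically complete valued field admits a separating basis. -/

/-- A ball in an (additively) valued abelian group: a set of the form
`{x : γ ≤ val (x - a)}` or `{x : γ < val (x - a)}` with `γ ∈ Γ`. -/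
def IsValBall {A Γ : Type*} [AddCommGroup A] [AddCommGroup Γ] [LinearOrder Γ] [IsOrderedAddMonoid Γ]
    (val : A → WithTop Γ) (B : Set A) : Prop :=
  ∃ (a : A) (γ : Γ), B = {x | (γ : WithTop Γ) ≤ val (x - a)} ∨
    B = {x | (γ : WithTop Γ) < val (x - a)}

/-- Spherical completeness: every nonempty chain of balls has nonempty
intersection. -/
def SphericallyComplete {A Γ : Type*} [AddCommGroup A] [AddCommGroup Γ] [LinearOrder Γ] [IsOrderedAddMonoid Γ]
    (val : A → WithTop Γ) : Prop :=
  ∀ 𝒞 : Set (Set A), (∀ B ∈ 𝒞, IsValBall val B) → IsChain (· ⊆ ·) 𝒞 →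
    𝒞.Nonempty → (∀ B ∈ 𝒞, B.Nonempty) → (⋂₀ 𝒞).Nonempty

section Aux

variable {K V Γ : Type*} [Field K] [AddCommGroup V] [Module K V]
    [AddCommGroup Γ] [LinearOrder Γ] [IsOrderedAddMonoid Γ]

lemma two_eq_zero {a : Γ} (h : a + a = 0) : a = 0 := by
  rcases lt_trichotomy a 0 with hl | he | hg
  · exact absurd h (ne_of_lt (by simpa using add_lt_add hl hl))
  · exact he
  · exact absurd h (ne_of_gt (by simpa using add_lt_add hg hg))

lemma range_snoc {n : ℕ} {α : Type*} (u : Fin n → α) (a : α) :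
    Set.range (Fin.snoc u a) = insert a (Set.range u) := by
  ext x
  simp only [Set.mem_range, Set.mem_insert_iff]
  constructor
  · rintro ⟨i, rfl⟩
    induction i using Fin.lastCases with
    | last => left; simp
    | cast j => right; exact ⟨j, by simp⟩
  · rintro (rfl | ⟨j, rfl⟩)
    · exact ⟨Fin.last n, by simp⟩
    · exact ⟨j.castSucc, by simp⟩

lemma add_min_distrib (γ a b : WithTop Γ) : γ + min a b = min (γ + a) (γ + b) := by
  rcases le_total a b with h | h
  · rw [min_eq_left h, min_eq_left (add_le_add le_rfl h)]
  · rw [min_eq_right h, min_eq_right (add_le_add le_rfl h)]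

variable (valK : K → WithTop Γ)
    (hvalK0 : ∀ x : K, valK x = ⊤ ↔ x = 0)
    (hvalKmul : ∀ x y : K, valK (x * y) = valK x + valK y)

include hvalK0 hvalKmul in
lemma valK_one : valK 1 = 0 := by
  have h1 : valK 1 ≠ ⊤ := by simp [hvalK0]
  obtain ⟨a, ha⟩ := WithTop.ne_top_iff_exists.mp h1
  have h2 : valK (1 * 1) = valK 1 + valK 1 := hvalKmul 1 1
  rw [one_mul, ← ha, ← WithTop.coe_add] at h2
  have : a = a + a := WithTop.coe_injective h2
  have ha0 : a = 0 := right_eq_add.mp this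
  rw [← ha, ha0]; rfl

include hvalK0 hvalKmul in
lemma valK_negone : valK (-1) = 0 := by
  have h1 : valK (-1) ≠ ⊤ := by simp [hvalK0]
  obtain ⟨a, ha⟩ := WithTop.ne_top_iff_exists.mp h1
  have h2 : valK ((-1) * (-1)) = valK (-1) + valK (-1) := hvalKmul _ _
  rw [neg_one_mul, neg_neg, valK_one valK hvalK0 hvalKmul, ← ha, ← WithTop.coe_add] at h2
  have : a + a = (0 : Γ) := by exact_mod_cast h2
  have ha0 : a = 0 := two_eq_zero this
  rw [← ha, ha0]; rfl

variable (valV : V → WithTop Γ)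
    (hvalV0 : ∀ v : V, valV v = ⊤ ↔ v = 0)
    (hultra : ∀ v w : V, min (valV v) (valV w) ≤ valV (v + w))
    (hsmul : ∀ (α : K) (v : V), valV (α • v) = valK α + valV v)

include hvalK0 hvalKmul hsmul in
lemma valV_neg (v : V) : valV (-v) = valV v := by
  have : -v = (-1 : K) • v := by simp
  rw [this, hsmul, valK_negone valK hvalK0 hvalKmul, zero_add]

include hvalK0 hvalKmul hsmul hultra in
lemma sub_ultra (v w : V) : min (valV v) (valV w) ≤ valV (v - w) := by
  rw [sub_eq_add_neg]
  calc min (valV v) (valV w) = min (valV v) (valV (-w)) := by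
        rw [valV_neg valK hvalK0 hvalKmul valV hsmul]
    _ ≤ valV (v + -w) := hultra _ _


include hvalK0 hvalKmul in
lemma valK_neg (a : K) : valK (-a) = valK a := by
  have : -a = (-1 : K) * a := by ring
  rw [this, hvalKmul, valK_negone valK hvalK0 hvalKmul, zero_add]

variable (hvalKultra : ∀ x y : K, min (valK x) (valK y) ≤ valK (x + y))

include hvalK0 hvalKmul hvalKultra hvalV0 hultra hsmul in
lemma bestApprox (hKsc : SphericallyComplete valK) {n : ℕ} (u : Fin n → V)
    (hsep : ∀ x : Fin n → K, valV (∑ i, x i • u i) = Finset.univ.inf fun i => valK (x i))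
    (v : V) :
    ∃ w₀ ∈ Submodule.span K (Set.range u),
      ∀ z ∈ Submodule.span K (Set.range u), valV (v - z) ≤ valV (v - w₀) := by
  by_cases hv : v ∈ Submodule.span K (Set.range u)
  · refine ⟨v, hv, fun z hz => ?_⟩
    rw [sub_self, (hvalV0 0).mpr rfl]
    exact le_top
  · set s : (Fin n → K) → V := fun x => ∑ i, x i • u i with hs
    have hsmem : ∀ x, s x ∈ Submodule.span K (Set.range u) := fun x =>
      Submodule.sum_smul_mem _ _ (fun i _ => Submodule.subset_span (Set.mem_range_self i))
    have hne : ∀ x : Fin n → K, valV (v - s x) ≠ ⊤ := by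
      intro x h
      exact hv (by rw [sub_eq_zero.mp ((hvalV0 _).mp h)]; exact hsmem x)
    choose g hg using fun x => WithTop.ne_top_iff_exists.mp (hne x)
    have hsdiff : ∀ x y : Fin n → K, s y - s x = ∑ i, (y i - x i) • u i := by
      intro x y
      rw [hs]
      simp only [sub_smul]
      rw [Finset.sum_sub_distrib]
    have hdiff : ∀ x y : Fin n → K, valV (v - s x) ≤ valV (v - s y) →
        ∀ i, (g x : WithTop Γ) ≤ valK (y i - x i) := by
      intro x y hxy i
      have h1 : valV (s y - s x) = Finset.univ.inf fun i => valK (y i - x i) := by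
        rw [hsdiff x y]; exact hsep _
      have h2 : min (valV (v - s x)) (valV (v - s y)) ≤ valV (s y - s x) := by
        have h := sub_ultra valK hvalK0 hvalKmul valV hultra hsmul (v - s x) (v - s y)
        rw [show (v - s x) - (v - s y) = s y - s x by abel] at h
        exact h
      calc (g x : WithTop Γ) = valV (v - s x) := hg x
        _ ≤ valV (s y - s x) := le_trans (le_min le_rfl hxy) h2
        _ = Finset.univ.inf fun i => valK (y i - x i) := h1
        _ ≤ valK (y i - x i) := Finset.inf_le (Finset.mem_univ i)
    have hball : ∀ i : Fin n, ∃ t : K, ∀ x : Fin n → K, (g x : WithTop Γ) ≤ valK (t - x i) := by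
      intro i
      set C : (Fin n → K) → Set K := fun x => {t : K | (g x : WithTop Γ) ≤ valK (t - x i)} with hC
      have hsub : ∀ x y, valV (v - s x) ≤ valV (v - s y) → C y ⊆ C x := by
        intro x y hxy t ht
        have hgxy : (g x : WithTop Γ) ≤ (g y : WithTop Γ) := by
          rw [hg x, hg y]; exact hxy
        have h2 : (g x : WithTop Γ) ≤ valK (y i - x i) := hdiff x y hxy i
        have h3 := hvalKultra (t - y i) (y i - x i)
        rw [show (t - y i) + (y i - x i) = t - x i by ring] at h3
        exact le_trans (le_min (le_trans hgxy ht) h2) h3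
      have hchain : IsChain (· ⊆ ·) (Set.range C) := by
        rintro _ ⟨x, rfl⟩ _ ⟨y, rfl⟩ -
        rcases le_total (valV (v - s x)) (valV (v - s y)) with h | h
        · exact Or.inr (hsub x y h)
        · exact Or.inl (hsub y x h)
      have hballs : ∀ B ∈ Set.range C, IsValBall valK B := by
        rintro _ ⟨x, rfl⟩
        exact ⟨x i, g x, Or.inl rfl⟩
      have hnonempty : ∀ B ∈ Set.range C, B.Nonempty := by
        rintro _ ⟨x, rfl⟩
        refine ⟨x i, ?_⟩
        show (g x : WithTop Γ) ≤ valK (x i - x i)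
        rw [sub_self, (hvalK0 0).mpr rfl]
        exact le_top
      obtain ⟨t, ht⟩ := hKsc (Set.range C) hballs hchain ⟨C 0, ⟨0, rfl⟩⟩ hnonempty
      exact ⟨t, fun x => ht (C x) ⟨x, rfl⟩⟩
    choose t ht using hball
    refine ⟨s t, hsmem t, ?_⟩
    intro z hz
    obtain ⟨x, rfl⟩ := (Submodule.mem_span_range_iff_exists_fun K).mp hz
    show valV (v - s x) ≤ valV (v - s t)
    have hstx : (g x : WithTop Γ) ≤ valV (s t - s x) := by
      rw [hsdiff x t, hsep]
      exact Finset.le_inf fun i _ => ht i x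
    have h2 : min (valV (v - s x)) (valV (s t - s x)) ≤ valV (v - s t) := by
      have h := sub_ultra valK hvalK0 hvalKmul valV hultra hsmul (v - s x) (s t - s x)
      rw [show (v - s x) - (s t - s x) = v - s t by abel] at h
      exact h
    have h3 : valV (v - s x) ≤ valV (s t - s x) := by
      rw [← hg x]; exact hstx
    exact le_trans (le_min le_rfl h3) h2

include hvalK0 hvalKmul hvalKultra hvalV0 hultra hsmul in
lemma mainAux (hvalKsurj : ∀ γ : Γ, ∃ x : K, valK x = γ)
    (hKsc : SphericallyComplete valK) [FiniteDimensional K V] :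
    ∀ (n : ℕ) (W : Submodule K V), Module.finrank K W = n →
    ∃ v : Fin n → V, (∀ i, v i ∈ W) ∧ Submodule.span K (Set.range v) = W ∧
      ∀ x : Fin n → K, valV (∑ i, x i • v i) = Finset.univ.inf fun i => valK (x i) := by
  intro n
  induction n with
  | zero =>
    intro W hW
    refine ⟨Fin.elim0, fun i => i.elim0, ?_, fun x => ?_⟩
    · rw [Set.range_eq_empty, Submodule.span_empty]
      exact (Submodule.finrank_eq_zero.mp hW).symm
    · simp [Finset.univ_eq_empty, (hvalV0 0).mpr rfl]
  | succ n ih =>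
    intro W hW
    have hb : Module.Basis (Fin (n+1)) K W := Module.finBasisOfFinrankEq K W hW
    set c : Fin (n+1) → V := fun i => (hb i : V) with hc
    have hcli : LinearIndependent K c :=
      hb.linearIndependent.map' W.subtype (Submodule.ker_subtype W)
    have hspanc : Submodule.span K (Set.range c) = W := by
      have h := congrArg (Submodule.map W.subtype) hb.span_eq
      rw [Submodule.map_span, Submodule.map_top, Submodule.range_subtype,
        ← Set.range_comp] at h
      exact h
    set u1 : Fin n → V := c ∘ Fin.castSucc with hu1
    have hu1li : LinearIndependent K u1 := hcli.comp _ (Fin.castSucc_injective n)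
    set W' : Submodule K V := Submodule.span K (Set.range u1) with hW'
    have hW'rank : Module.finrank K W' = n := by
      rw [finrank_span_eq_card hu1li]
      simp
    obtain ⟨u, humem, huspan, husep⟩ := ih W' hW'rank
    set v0 : V := c (Fin.last n) with hv0
    have hv0W : v0 ∈ W := by rw [← hspanc]; exact Submodule.subset_span (Set.mem_range_self _)
    have hW'le : W' ≤ W := by
      rw [hW', ← hspanc]
      exact Submodule.span_mono (by rintro _ ⟨j, rfl⟩; exact Set.mem_range_self _)
    have hv0notW' : v0 ∉ W' := by
      intro h
      have hlast : Fin.last n ∉ Set.range (Fin.castSucc : Fin n → Fin (n+1)) := by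
        rintro ⟨j, hj⟩
        exact absurd hj (Fin.castSucc_lt_last j).ne
      have h2 : c (Fin.last n) ∈ Submodule.span K (c '' Set.range Fin.castSucc) := by
        rw [← Set.range_comp]
        exact h
      exact hcli.notMem_span_image hlast h2
    obtain ⟨w₀, hw₀mem, hw₀⟩ :=
      bestApprox valK hvalK0 hvalKmul valV hvalV0 hultra hsmul hvalKultra hKsc u husep v0
    rw [huspan] at hw₀mem hw₀
    set v1 : V := v0 - w₀ with hv1
    have hv1ne : v1 ≠ 0 := by
      intro h
      exact hv0notW' (by rw [show v0 = w₀ from sub_eq_zero.mp h]; exact hw₀mem)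
    have hP : ∀ z ∈ W', valV (v1 + z) ≤ valV v1 := by
      intro z hz
      have h1 : valV (v0 - (w₀ - z)) ≤ valV (v0 - w₀) := hw₀ _ (Submodule.sub_mem _ hw₀mem hz)
      rw [show v0 - (w₀ - z) = v1 + z by rw [hv1]; abel] at h1
      exact h1
    have hP2 : ∀ z ∈ W', valV (v1 + z) = min (valV v1) (valV z) := by
      intro z hz
      rcases le_or_gt (valV v1) (valV z) with h | h
      · rw [min_eq_left h]
        exact le_antisymm (hP z hz) (le_trans (le_min le_rfl h) (hultra v1 z))
      · rw [min_eq_right h.le]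
        refine le_antisymm ?_ (le_trans (le_min h.le le_rfl) (hultra v1 z))
        by_contra hcon
        push_neg at hcon
        have h4 : (v1 + z) - v1 = z := by abel
        have h5 := sub_ultra valK hvalK0 hvalKmul valV hultra hsmul (v1 + z) v1
        rw [h4] at h5
        exact absurd h5 (not_le.mpr (lt_min hcon h))
    have hv1top : valV v1 ≠ ⊤ := fun h => hv1ne ((hvalV0 v1).mp h)
    obtain ⟨gw, hgw⟩ := WithTop.ne_top_iff_exists.mp hv1top
    obtain ⟨cK, hcK⟩ := hvalKsurj (-gw)
    have hcKne : cK ≠ 0 := by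
      intro h
      rw [h, (hvalK0 0).mpr rfl] at hcK
      exact WithTop.top_ne_coe hcK
    set v2 : V := cK • v1 with hv2
    have hA : ∀ α : K, ∀ z ∈ W', valV (α • v2 + z) = min (valK α) (valV z) := by
      intro α z hz
      by_cases hα : α = 0
      · rw [hα, zero_smul, zero_add, (hvalK0 0).mpr rfl, min_eq_right le_top]
      · set β := α * cK with hβ
        have hβne : β ≠ 0 := mul_ne_zero hα hcKne
        have hβtop : valK β ≠ ⊤ := fun h => hβne ((hvalK0 β).mp h)
        obtain ⟨gβ, hgβ⟩ := WithTop.ne_top_iff_exists.mp hβtop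
        have hβinv : valK β + valK β⁻¹ = 0 := by
          rw [← hvalKmul, mul_inv_cancel₀ hβne, valK_one valK hvalK0 hvalKmul]
        have hzmem : β⁻¹ • z ∈ W' := Submodule.smul_mem _ _ hz
        have hkey : α • v2 + z = β • (v1 + β⁻¹ • z) := by
          rw [smul_add, smul_inv_smul₀ hβne, hv2, smul_smul, ← hβ]
        rw [hkey, hsmul, hP2 _ hzmem, ← hgβ, hsmul, add_min_distrib]
        congr 1
        · rw [hgβ, hβ, hvalKmul, hcK, ← hgw, add_assoc, ← WithTop.coe_add,
            neg_add_cancel, WithTop.coe_zero, add_zero]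
        · rw [hgβ, ← add_assoc, hβinv, zero_add]
    have hv2W : v2 ∈ W :=
      Submodule.smul_mem _ _ (Submodule.sub_mem _ hv0W (hW'le hw₀mem))
    have hW'le2 : W' ≤ Submodule.span K (insert v2 (Set.range u)) := by
      rw [← huspan]
      exact Submodule.span_mono (Set.subset_insert _ _)
    refine ⟨Fin.snoc u v2, ?_, ?_, ?_⟩
    · intro i
      induction i using Fin.lastCases with
      | last => rw [Fin.snoc_last]; exact hv2W
      | cast j => rw [Fin.snoc_castSucc]; exact hW'le (humem j)
    · rw [range_snoc]
      apply le_antisymm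
      · rw [Submodule.span_le]
        intro x hx
        rcases Set.mem_insert_iff.mp hx with rfl | hx2
        · exact hv2W
        · obtain ⟨j, rfl⟩ := hx2
          exact hW'le (humem j)
      · rw [← hspanc, Submodule.span_le]
        rintro _ ⟨i, rfl⟩
        induction i using Fin.lastCases with
        | last =>
          have hv0eq : v0 = w₀ + cK⁻¹ • v2 := by
            rw [hv2, smul_smul, inv_mul_cancel₀ hcKne, one_smul, hv1]; abel
          show c (Fin.last n) ∈ _
          rw [← hv0, hv0eq]
          refine Submodule.add_mem _ (hW'le2 hw₀mem) ?_
          exact Submodule.smul_mem _ _ (Submodule.subset_span (Set.mem_insert _ _))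
        | cast j =>
          show c (Fin.castSucc j) ∈ _
          exact hW'le2 (Submodule.subset_span (Set.mem_range_self j))
    · intro x
      have hsum : ∑ i, x i • Fin.snoc u v2 i
          = x (Fin.last n) • v2 + ∑ i : Fin n, x (Fin.castSucc i) • u i := by
        rw [Fin.sum_univ_castSucc]
        simp only [Fin.snoc_castSucc, Fin.snoc_last]
        exact add_comm _ _
      have hzmem : ∑ i : Fin n, x (Fin.castSucc i) • u i ∈ W' :=
        Submodule.sum_smul_mem _ _ fun i _ => humem i
      rw [hsum, hA _ _ hzmem, husep fun i => x (Fin.castSucc i)]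
      rw [Fin.univ_castSuccEmb, Finset.inf_cons, Finset.inf_map]
      rfl

end Aux

theorem stmt2 {K V Γ : Type*} [Field K] [AddCommGroup V] [Module K V]
    [AddCommGroup Γ] [LinearOrder Γ] [IsOrderedAddMonoid Γ] (n : ℕ)
    (valK : K → WithTop Γ)
    (hvalK0 : ∀ x : K, valK x = ⊤ ↔ x = 0)
    (hvalKmul : ∀ x y : K, valK (x * y) = valK x + valK y)
    (hvalKultra : ∀ x y : K, min (valK x) (valK y) ≤ valK (x + y))
    (hvalKsurj : ∀ γ : Γ, ∃ x : K, valK x = γ)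
    (hKsc : SphericallyComplete valK)
    (valV : V → WithTop Γ)
    (hvalV0 : ∀ v : V, valV v = ⊤ ↔ v = 0)
    (hultra : ∀ v w : V, min (valV v) (valV w) ≤ valV (v + w))
    (hsmul : ∀ (α : K) (v : V), valV (α • v) = valK α + valV v)
    [FiniteDimensional K V] (hdim : Module.finrank K V = n) :
    ∃ v : Fin n → V, LinearIndependent K v ∧ Submodule.span K (Set.range v) = ⊤ ∧
      ∀ x : Fin n → K,
        valV (∑ i, x i • v i) = Finset.univ.inf (fun i => valK (x i)) := by

  have htop : Module.finrank K (⊤ : Submodule K V) = n := by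
    rw [finrank_top]; exact hdim
  obtain ⟨v, -, hspan, hsep⟩ :=
    mainAux valK hvalK0 hvalKmul valV hvalV0 hultra hsmul hvalKultra hvalKsurj hKsc n ⊤ htop
  refine ⟨v, ?_, ?_, hsep⟩
  · rw [Fintype.linearIndependent_iff]
    intro g hg i
    have h1 : valV (∑ i, g i • v i) = ⊤ := by rw [hg]; exact (hvalV0 0).mpr rfl
    rw [hsep] at h1
    exact (hvalK0 (g i)).mp ((Finset.inf_eq_top_iff _ _).mp h1 i (Finset.mem_univ i))
  · exact hspan
end

section
/- Let V be a spherically complete subspace of a valued K-vector space W and let a ∈ W. Then the set {val(a + v) : v ∈ V} ⊆ Γ(W) ∪ {+∞} has a maximum; i.e., some element of the coset a + V is maximally close to 0. -/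
theorem stmt4 {K W Γ : Type*} [Field K] [AddCommGroup W] [Module K W]
    [AddCommGroup Γ] [LinearOrder Γ] [IsOrderedAddMonoid Γ]
    (valK : K → WithTop Γ)
    (hvalK0 : ∀ x : K, valK x = ⊤ ↔ x = 0)
    (hvalKmul : ∀ x y : K, valK (x * y) = valK x + valK y)
    (hvalKultra : ∀ x y : K, min (valK x) (valK y) ≤ valK (x + y))
    (valW : W → WithTop Γ)
    (hvalW0 : ∀ w : W, valW w = ⊤ ↔ w = 0)
    (hultra : ∀ v w : W, min (valW v) (valW w) ≤ valW (v + w))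
    (hsmul : ∀ (α : K) (w : W), valW (α • w) = valK α + valW w)
    (V : Submodule K W)
    (hVsc : SphericallyComplete (fun v : V => valW (v : W)))
    (a : W) :
    ∃ v₀ ∈ V, ∀ v ∈ V, valW (a + v) ≤ valW (a + v₀) := by
  by_cases htop : ∃ v ∈ V, valW (a + v) = ⊤
  · obtain ⟨v, hv, hval⟩ := htop
    exact ⟨v, hv, fun w _ => hval ▸ le_top⟩
  push_neg at htop
  -- valK 1 = 0
  have hK1 : valK 1 = 0 := by
    have h := hvalKmul 1 1
    rw [mul_one] at h
    cases e : valK 1 with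
    | top => exact absurd ((hvalK0 1).mp e) one_ne_zero
    | coe g =>
      rw [e] at h
      have hg : g = g + g := by exact_mod_cast h
      have : g = 0 := (left_eq_add.mp hg)
      simp [e, this]
  have hKneg : valK (-1 : K) = 0 := by
    have h := hvalKmul (-1) (-1)
    rw [neg_mul_neg, one_mul, hK1] at h
    cases e : valK (-1 : K) with
    | top => rw [e] at h; simp at h
    | coe g =>
      rw [e] at h
      have hg : g + g = 0 := by exact_mod_cast h.symm
      have : g = 0 := by
        by_contra hne
        rcases lt_or_gt_of_ne hne with h' | h'
        · have h2 : g + g < 0 := by simpa using add_neg h' h'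
          rw [hg] at h2; exact lt_irrefl 0 h2
        · have h2 : (0:Γ) < g + g := add_pos h' h'
          rw [hg] at h2; exact lt_irrefl 0 h2
      simp [e, this]
  have hneg : ∀ w : W, valW (-w) = valW w := by
    intro w
    have := hsmul (-1) w
    rw [neg_one_smul, hKneg, zero_add] at this
    exact this
  -- key lemma
  have key : ∀ v x : W, valW (a + v) ≤ valW (a + x) ↔ valW (a + v) ≤ valW (x - v) := by
    intro v x
    constructor
    · intro h
      have h1 := hultra (a + x) (-(a + v))
      rw [hneg] at h1
      have h2 : (a + x) + -(a + v) = x - v := by abel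
      rw [h2] at h1
      exact le_trans (le_min h le_rfl) h1
    · intro h
      have h1 := hultra (a + v) (x - v)
      have h2 : (a + v) + (x - v) = a + x := by abel
      rw [h2] at h1
      exact le_trans (le_min le_rfl h) h1
  set B : V → Set V := fun v => {x : V | valW (a + (v : W)) ≤ valW (a + (x : W))} with hB
  set 𝒞 : Set (Set V) := Set.range B with h𝒞
  have hvs : ∀ B' ∈ 𝒞, B'.Nonempty := by
    rintro _ ⟨v, rfl⟩
    exact ⟨v, show valW (a + (v : W)) ≤ valW (a + (v : W)) from le_rfl⟩
  have hballs : ∀ B' ∈ 𝒞, IsValBall (fun v : V => valW (v : W)) B' := by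
    rintro _ ⟨v, rfl⟩
    obtain ⟨γ, hγ⟩ : ∃ γ : Γ, valW (a + (v : W)) = ↑γ := by
      cases e : valW (a + (v : W)) with
      | top => exact absurd e (htop v v.2)
      | coe g => exact ⟨g, rfl⟩
    refine ⟨v, γ, Or.inl ?_⟩
    ext x
    simp only [hB, Set.mem_setOf_eq]
    have : ((x - v : V) : W) = (x : W) - (v : W) := rfl
    rw [this, ← hγ]
    exact key (v : W) (x : W)
  have hchain : IsChain (· ⊆ ·) 𝒞 := by
    rintro _ ⟨v, rfl⟩ _ ⟨w, rfl⟩ _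
    rcases le_total (valW (a + (v : W))) (valW (a + (w : W))) with h | h
    · exact Or.inr fun x hx => le_trans h hx
    · exact Or.inl fun x hx => le_trans h hx
  have hne : 𝒞.Nonempty := ⟨B 0, ⟨0, rfl⟩⟩
  obtain ⟨v₀, hv₀⟩ := hVsc 𝒞 hballs hchain hne hvs
  refine ⟨v₀, v₀.2, fun w hw => ?_⟩
  have := hv₀ (B ⟨w, hw⟩) ⟨⟨w, hw⟩, rfl⟩
  exact this
end

section
/- Let K be a valued field with value group Γ, and let N ⊆ V be an 𝒪-submodule of a finite-dimensional K-vector space V such that the K-span of N is V, N contains no nonzero K-subspace, and for every nonzero v ∈ V the set {val(α) : α ∈ K^×, v ∈ αN} has a supremum in Γ (defining val_N(v) as this supremum). Then val_N makes V into a valued K-vector space: val_N(βv) = val(β) + val_N(v), val_N(v+w) ≥ min(val_N(v), val_N(w)), and moreover val_N(v) > 0 implies v ∈ N while val_N(v) < 0 implies v ∉ N. -/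
/- STATEMENT 6: Let K be a valued field with value group Γ and N ⊆ V an
𝒪-submodule of a finite-dimensional K-vector space whose K-span is V,
containing no nonzero K-subspace, and such that for every nonzero v the set
{val α : v ∈ αN} has a supremum val_N(v) in Γ.  Then val_N makes V a valued
K-vector space: val_N(βv) = val β + val_N v, the ultrametric inequality holds,
val_N v > 0 implies v ∈ N and val_N v < 0 implies v ∉ N. -/
theorem stmt6 {K V Γ : Type*} [Field K] [AddCommGroup V] [Module K V]
    [AddCommGroup Γ] [LinearOrder Γ] [IsOrderedAddMonoid Γ] [FiniteDimensional K V]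
    (valK : K → WithTop Γ)
    (hvalK0 : ∀ x : K, valK x = ⊤ ↔ x = 0)
    (hvalKmul : ∀ x y : K, valK (x * y) = valK x + valK y)
    (hvalKultra : ∀ x y : K, min (valK x) (valK y) ≤ valK (x + y))
    (N : Set V)
    (hN0 : (0 : V) ∈ N)
    (hNadd : ∀ x ∈ N, ∀ y ∈ N, x + y ∈ N)
    (hNsmul : ∀ α : K, 0 ≤ valK α → ∀ x ∈ N, α • x ∈ N)
    (hspan : Submodule.span K N = ⊤)
    (hnosub : ∀ v : V, v ≠ 0 → ∃ α : K, α • v ∉ N)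
    (valN : V → Γ)
    (hsup : ∀ v : V, v ≠ 0 →
      IsLUB {γ : Γ | ∃ α : K, valK α = (γ : WithTop Γ) ∧ ∃ w ∈ N, v = α • w}
        (valN v)) :
    (∀ (β : K) (v : V), β ≠ 0 → v ≠ 0 →
        (valN (β • v) : WithTop Γ) = valK β + (valN v : WithTop Γ)) ∧
    (∀ v w : V, v ≠ 0 → w ≠ 0 → v + w ≠ 0 →
        min (valN v) (valN w) ≤ valN (v + w)) ∧
    (∀ v : V, v ≠ 0 → 0 < valN v → v ∈ N) ∧
    (∀ v : V, v ≠ 0 → valN v < 0 → v ∉ N) := by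
  have h1 : valK 1 = 0 := by
    have hne : valK 1 ≠ ⊤ := fun h' => one_ne_zero ((hvalK0 1).mp h')
    obtain ⟨c, hc⟩ := WithTop.ne_top_iff_exists.mp hne
    have h := hvalKmul 1 1
    rw [one_mul, ← hc, ← WithTop.coe_add, WithTop.coe_eq_coe] at h
    have hc0 : c = 0 := left_eq_add.mp h
    rw [← hc, hc0, WithTop.coe_zero]
  have hinv : ∀ (β : K) (b : Γ), β ≠ 0 → valK β = ↑b → valK β⁻¹ = ↑(-b) := by
    intro β b hβ hb
    have hne : valK β⁻¹ ≠ ⊤ := fun h' => inv_ne_zero hβ ((hvalK0 _).mp h')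
    obtain ⟨c, hc⟩ := WithTop.ne_top_iff_exists.mp hne
    have h := hvalKmul β⁻¹ β
    rw [inv_mul_cancel₀ hβ, h1, ← hc, hb, ← WithTop.coe_add, ← WithTop.coe_zero,
      WithTop.coe_eq_coe] at h
    rw [← hc, WithTop.coe_eq_coe]
    exact eq_neg_of_add_eq_zero_left h.symm
  have key : ∀ (β : K) (b : Γ), valK β = ↑b → ∀ (v : V) (δ : Γ),
      δ ∈ {γ : Γ | ∃ α : K, valK α = (γ : WithTop Γ) ∧ ∃ w ∈ N, v = α • w} →
      b + δ ∈ {γ : Γ | ∃ α : K, valK α = (γ : WithTop Γ) ∧ ∃ w ∈ N, β • v = α • w} := by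
    rintro β b hb v δ ⟨α, hα, w, hw, rfl⟩
    exact ⟨β * α, by rw [hvalKmul, hb, hα, ← WithTop.coe_add], w, hw, smul_smul β α w⟩
  have aux : ∀ (v w : V) (γ₁ γ₂ : Γ), γ₁ ≤ γ₂ →
      γ₁ ∈ {γ : Γ | ∃ α : K, valK α = (γ : WithTop Γ) ∧ ∃ w ∈ N, v = α • w} →
      γ₂ ∈ {γ : Γ | ∃ α : K, valK α = (γ : WithTop Γ) ∧ ∃ u ∈ N, w = α • u} →
      γ₁ ∈ {γ : Γ | ∃ α : K, valK α = (γ : WithTop Γ) ∧ ∃ u ∈ N, v + w = α • u} := by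
    rintro v w γ₁ γ₂ hle ⟨α, hα, w₁, hw₁, rfl⟩ ⟨β, hβ, w₂, hw₂, rfl⟩
    have hα0 : α ≠ 0 := by
      intro h; rw [h, (hvalK0 0).mpr rfl] at hα; exact (WithTop.coe_ne_top hα.symm)
    have hval : valK (α⁻¹ * β) = ↑(-γ₁ + γ₂) := by
      rw [hvalKmul, hinv α γ₁ hα0 hα, hβ, ← WithTop.coe_add]
    have hpos : 0 ≤ valK (α⁻¹ * β) := by
      rw [hval, ← WithTop.coe_zero, WithTop.coe_le_coe]
      simpa using hle
    refine ⟨α, hα, w₁ + (α⁻¹ * β) • w₂, hNadd _ hw₁ _ (hNsmul _ hpos _ hw₂), ?_⟩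
    rw [smul_add, smul_smul, mul_inv_cancel_left₀ hα0]
  refine ⟨?_, ?_, ?_, ?_⟩
  · intro β v hβ hv
    have hne : valK β ≠ ⊤ := fun h' => hβ ((hvalK0 _).mp h')
    obtain ⟨b, hb⟩ := WithTop.ne_top_iff_exists.mp hne
    have hb' : valK β = ↑b := hb.symm
    have hβv : β • v ≠ 0 := smul_ne_zero hβ hv
    have hlub : IsLUB {γ : Γ | ∃ α : K, valK α = (γ : WithTop Γ) ∧ ∃ w ∈ N, β • v = α • w}
        (b + valN v) := by
      constructor
      · intro γ hγ
        have h2 := key β⁻¹ (-b) (hinv β b hβ hb') (β • v) γ hγ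
        rw [inv_smul_smul₀ hβ] at h2
        have h3 := (hsup v hv).1 h2
        calc γ = b + (-b + γ) := by abel
        _ ≤ b + valN v := add_le_add_right h3 b
      · intro u hu
        have h3 : valN v ≤ -b + u := by
          apply (hsup v hv).2
          intro γ hγ
          have h4 := hu (key β b hb' v γ hγ)
          calc γ = -b + (b + γ) := by abel
          _ ≤ -b + u := add_le_add_right h4 (-b)
        calc b + valN v ≤ b + (-b + u) := add_le_add_right h3 b
        _ = u := by abel
    rw [(hsup (β • v) hβv).unique hlub, hb', ← WithTop.coe_add]
  · intro v w hv hw hvw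
    by_contra hcon
    push_neg at hcon
    obtain ⟨γ₁, hγ₁S, hγ₁⟩ := (lt_isLUB_iff (hsup v hv)).mp
      (lt_of_lt_of_le hcon (min_le_left _ _))
    obtain ⟨γ₂, hγ₂S, hγ₂⟩ := (lt_isLUB_iff (hsup w hw)).mp
      (lt_of_lt_of_le hcon (min_le_right _ _))
    rcases le_total γ₁ γ₂ with h | h
    · exact absurd ((hsup _ hvw).1 (aux v w γ₁ γ₂ h hγ₁S hγ₂S)) (not_le.mpr hγ₁)
    · have h2 := aux w v γ₂ γ₁ h hγ₂S hγ₁S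
      rw [add_comm w v] at h2
      exact absurd ((hsup _ hvw).1 h2) (not_le.mpr hγ₂)
  · intro v hv hpos
    obtain ⟨γ, ⟨α, hα, w, hw, hvw⟩, hγ⟩ := (lt_isLUB_iff (hsup v hv)).mp hpos
    rw [hvw]
    refine hNsmul α ?_ w hw
    rw [hα, ← WithTop.coe_zero, WithTop.coe_le_coe]
    exact le_of_lt hγ
  · intro v hv hneg hmem
    have h0 : (0 : Γ) ∈ {γ : Γ | ∃ α : K, valK α = (γ : WithTop Γ) ∧ ∃ w ∈ N, v = α • w} :=
      ⟨1, by rw [h1, WithTop.coe_zero], v, hmem, (one_smul K v).symm⟩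
    exact absurd ((hsup v hv).1 h0) (not_le.mpr hneg)
end

section
/- In any theory T, the following are equivalent for small sets A, B, C: (1) tp(A/BC) has a global C-definable extension; (2) for every small D there is a C-definable extension of tp(A/BC) to a type over BCD; (3) for every small D there is D' ≡_{BC} D with tp(A/BCD') C-definable; (4) for some small model M ⊇ BC, tp(A/M) is C-definable. -/
/- STATEMENT 9: In the monster model of a complete theory, the following are
equivalent for small A, B, C: (1) tp(A/BC) has a global C-definable extension;
(2) for every small D there is a C-definable extension of tp(A/BC) to a type
over BCD (equivalently, a realization A' ≡_{BC} A with tp(A'/BCD) C-definable);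
(3) for every small D there is D' ≡_{BC} D with tp(A/BCD') C-definable;
(4) for some small model M₀ ⊇ BC, tp(A/M₀) is C-definable.
The monster model is axiomatized by saturation, homogeneity and downward
Löwenheim–Skolem hypotheses relative to a cardinal κ bounding "small". -/

open FirstOrder Cardinal

universe u v w

/-- `tp(a/B)` is `C`-definable. -/
def TpDef (L : FirstOrder.Language.{v, w}) {M : Type u} [L.Structure M] {ι : Type u}
    (a : ι → M) (B C : Set M) : Prop :=
  ∀ (m n : ℕ) (f : Fin m → ι) (φ : L.Formula (Fin m ⊕ Fin n)),
    ∃ (k : ℕ) (c : Fin k → M) (ψ : L.Formula (Fin k ⊕ Fin n)),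
      (∀ i, c i ∈ C) ∧
      ∀ b : Fin n → M, (∀ i, b i ∈ B) →
        (φ.Realize (Sum.elim (a ∘ f) b) ↔ ψ.Realize (Sum.elim c b))

/-- Two tuples have the same type over `E`. -/
def EqTp (L : FirstOrder.Language.{v, w}) {M : Type u} [L.Structure M] {ι : Type u}
    (x y : ι → M) (E : Set M) : Prop :=
  ∀ (m n : ℕ) (f : Fin m → ι) (φ : L.Formula (Fin m ⊕ Fin n)) (b : Fin n → M),
    (∀ i, b i ∈ E) →
    (φ.Realize (Sum.elim (x ∘ f) b) ↔ φ.Realize (Sum.elim (y ∘ f) b))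

/-- A complete global type over the monster `M` in variables indexed by `ι`:
a maximal finitely satisfiable assignment of truth values to formulas with
parameters from `M`. -/
structure GlobalType (L : FirstOrder.Language.{v, w}) (M : Type u) [L.Structure M]
    (ι : Type u) where
  mem : ∀ (m n : ℕ), (Fin m → ι) → L.Formula (Fin m ⊕ Fin n) → (Fin n → M) → Prop
  finSat : ∀ (N : ℕ) (m n : Fin N → ℕ) (f : ∀ j, Fin (m j) → ι)
      (φ : ∀ j, L.Formula (Fin (m j) ⊕ Fin (n j))) (b : ∀ j, Fin (n j) → M),
      (∀ j, mem _ _ (f j) (φ j) (b j)) →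
      ∃ a : ι → M, ∀ j, (φ j).Realize (Sum.elim (a ∘ f j) (b j))
  maximal : ∀ m n f φ b, mem m n f φ.not b ↔ ¬ mem m n f φ b

/-- A global type is `C`-definable. -/
def GlobalType.CDefinable {L : FirstOrder.Language.{v, w}} {M : Type u} [L.Structure M]
    {ι : Type u} (p : GlobalType L M ι) (C : Set M) : Prop :=
  ∀ (m n : ℕ) (f : Fin m → ι) (φ : L.Formula (Fin m ⊕ Fin n)),
    ∃ (k : ℕ) (c : Fin k → M) (ψ : L.Formula (Fin k ⊕ Fin n)),
      (∀ i, c i ∈ C) ∧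
      ∀ b : Fin n → M, (p.mem m n f φ b ↔ ψ.Realize (Sum.elim c b))

/-- A global type extends `tp(a/B)`. -/
def GlobalType.ExtendsTp {L : FirstOrder.Language.{v, w}} {M : Type u} [L.Structure M]
    {ι : Type u} (p : GlobalType L M ι) (a : ι → M) (B : Set M) : Prop :=
  ∀ (m n : ℕ) (f : Fin m → ι) (φ : L.Formula (Fin m ⊕ Fin n)) (b : Fin n → M),
    (∀ i, b i ∈ B) → φ.Realize (Sum.elim (a ∘ f) b) → p.mem m n f φ b

/-- The tuple `a` realizes the restriction `p|E`. -/
def GlobalType.RlzOn {L : FirstOrder.Language.{v, w}} {M : Type u} [L.Structure M]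
    {ι : Type u} (p : GlobalType L M ι) (a : ι → M) (E : Set M) : Prop :=
  ∀ (m n : ℕ) (f : Fin m → ι) (φ : L.Formula (Fin m ⊕ Fin n)) (b : Fin n → M),
    (∀ i, b i ∈ E) → p.mem m n f φ b → φ.Realize (Sum.elim (a ∘ f) b)

/-- `A ⫝¹_C B` : `tp(A/BC)` has a global `C`-definable extension. -/
def Indep1 (L : FirstOrder.Language.{v, w}) {M : Type u} [L.Structure M] {ι : Type u}
    (a : ι → M) (C B : Set M) : Prop :=
  ∃ p : GlobalType L M ι, p.CDefinable C ∧ p.ExtendsTp a (B ∪ C)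

namespace Stmt9
variable {L : FirstOrder.Language.{v, w}} {M : Type u} [L.Structure M]

variable {L : FirstOrder.Language.{v, w}} {M : Type u} [L.Structure M]

lemma realize_sub (S : L.ElementarySubstructure M) {α : Type*} (φ : L.Formula α) (x : α → S) :
    φ.Realize (((↑) : S → M) ∘ x) ↔ φ.Realize x :=
  S.subtype.map_formula φ x

lemma transfer (S : L.ElementarySubstructure M) {β γ : Type} [Finite γ]
    (χ₁ χ₂ : L.Formula (β ⊕ γ)) (v : β → M) (hv : ∀ i, v i ∈ S)
    (h : ∀ b : γ → M, (∀ i, b i ∈ S) → (χ₁.Realize (Sum.elim v b) → χ₂.Realize (Sum.elim v b))) :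
    ∀ b : γ → M, χ₁.Realize (Sum.elim v b) → χ₂.Realize (Sum.elim v b) := by
  classical
  let σ : L.Formula β := (χ₁.imp χ₂).iAlls γ
  let v' : β → S := fun i => ⟨v i, hv i⟩
  have key : σ.Realize v := by
    have h1 : σ.Realize (((↑) : S → M) ∘ v') ↔ σ.Realize v' := realize_sub S σ v'
    have h2 : σ.Realize v' := by
      rw [Language.Formula.realize_iAlls]
      intro i
      have h3 : (χ₁.imp χ₂).Realize (((↑) : S → M) ∘ (Sum.elim v' i)) ↔
          (χ₁.imp χ₂).Realize (Sum.elim v' i) := realize_sub S _ _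
      show (χ₁.imp χ₂).Realize (Sum.elim v' i)
      rw [← h3, Language.Formula.realize_imp]
      have h4 : ((↑) : S → M) ∘ (Sum.elim v' i) = Sum.elim v (((↑) : S → M) ∘ i) := by
        funext x; cases x <;> rfl
      rw [h4]
      exact h _ (fun j => (i j).2)
    exact h1.mpr h2
  intro b
  rw [Language.Formula.realize_iAlls] at key
  have := key b
  rw [Language.Formula.realize_imp] at this
  exact this

lemma four_one (κ : Cardinal.{u})
    {ι : Type u} (a : ι → M) (B C : Set M)
    (h4 : ∃ S : L.ElementarySubstructure M, B ∪ C ⊆ (S : L.Substructure M) ∧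
      #((S : L.Substructure M) : Set M) < κ ∧
      TpDef L a ((S : L.Substructure M) : Set M) C) :
    Indep1 L a C B := by
  classical
  obtain ⟨S, hsub, hScard, hdef⟩ := h4
  choose kk cc ψψ hcc hspec using hdef
  have hCS : ∀ x ∈ C, x ∈ S := fun x hx => hsub (Or.inr hx)
  refine ⟨⟨fun m n f φ b => (ψψ m n f φ).Realize (Sum.elim (cc m n f φ) b), ?_, ?_⟩, ?_, ?_⟩
  · -- finSat
    intro N m n f φ b hmem
    set β := (Σ j : Fin N, Fin (kk (m j) (n j) (f j) (φ j))) with hβ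
    set γ := (Σ j : Fin N, Fin (n j)) with hγ
    set F : (Σ j : Fin N, Fin (m j)) → ι := fun s => f s.1 s.2 with hF
    haveI : Finite ↥(Set.range F) := (Set.finite_range F).to_subtype
    set v : β → M := fun s => cc (m s.1) (n s.1) (f s.1) (φ s.1) s.2 with hv
    have hvS : ∀ i, v i ∈ S := fun i => hCS _ (hcc (m i.1) (n i.1) (f i.1) (φ i.1) i.2)
    set χ₁ : L.Formula (β ⊕ γ) :=
      Language.BoundedFormula.iInf (fun j : Fin N =>
        (ψψ (m j) (n j) (f j) (φ j)).relabel
          (Sum.map (fun s => (⟨j, s⟩ : β)) (fun s => (⟨j, s⟩ : γ)))) with hχ₁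
    set χ₂' : L.Formula (β ⊕ (γ ⊕ ↥(Set.range F))) :=
      Language.BoundedFormula.iInf (fun j : Fin N =>
        (φ j).relabel (Sum.elim
          (fun i => Sum.inr (Sum.inr (⟨f j i, ⟨⟨j, i⟩, rfl⟩⟩ : ↥(Set.range F))))
          (fun s => Sum.inr (Sum.inl (⟨j, s⟩ : γ))))) with hχ₂'
    set g : β ⊕ (γ ⊕ ↥(Set.range F)) → (β ⊕ γ) ⊕ ↥(Set.range F) :=
      Sum.elim (fun x => Sum.inl (Sum.inl x))
        (Sum.elim (fun y => Sum.inl (Sum.inr y)) Sum.inr) with hg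
    set χ₂ : L.Formula (β ⊕ γ) := (χ₂'.relabel g).iExs (↥(Set.range F)) with hχ₂
    have hχ₁real : ∀ bb : γ → M, (χ₁.Realize (Sum.elim v bb) ↔ ∀ j : Fin N,
        (ψψ (m j) (n j) (f j) (φ j)).Realize
          (Sum.elim (cc (m j) (n j) (f j) (φ j)) (fun s => bb ⟨j, s⟩))) := by
      intro bb
      have h0 : χ₁.Realize (Sum.elim v bb) ↔
          Language.BoundedFormula.Realize χ₁ (Sum.elim v bb) default := Iff.rfl
      rw [h0, hχ₁, Language.BoundedFormula.realize_iInf]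
      constructor
      · intro h j
        have h2 : Language.Formula.Realize
          ((ψψ (m j) (n j) (f j) (φ j)).relabel
            (Sum.map (fun s => (⟨j, s⟩ : β)) (fun s => (⟨j, s⟩ : γ)))) (Sum.elim v bb) :=
          h j
        rw [Language.Formula.realize_relabel] at h2
        have heq : (Sum.elim v bb) ∘ (Sum.map (fun s => (⟨j, s⟩ : β)) (fun s => (⟨j, s⟩ : γ)))
            = Sum.elim (cc (m j) (n j) (f j) (φ j)) (fun s => bb ⟨j, s⟩) := by
          funext x; cases x <;> rfl
        rwa [heq] at h2
      · intro h j
        show Language.Formula.Realize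
          ((ψψ (m j) (n j) (f j) (φ j)).relabel
            (Sum.map (fun s => (⟨j, s⟩ : β)) (fun s => (⟨j, s⟩ : γ)))) (Sum.elim v bb)
        rw [Language.Formula.realize_relabel]
        have heq : (Sum.elim v bb) ∘ (Sum.map (fun s => (⟨j, s⟩ : β)) (fun s => (⟨j, s⟩ : γ)))
            = Sum.elim (cc (m j) (n j) (f j) (φ j)) (fun s => bb ⟨j, s⟩) := by
          funext x; cases x <;> rfl
        rw [heq]
        exact h j
    have hχ₂real : ∀ bb : γ → M, (χ₂.Realize (Sum.elim v bb) ↔ ∃ i : ↥(Set.range F) → M,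
        ∀ j : Fin N, (φ j).Realize (Sum.elim
          (fun idx : Fin (m j) => i (⟨f j idx, ⟨⟨j, idx⟩, rfl⟩⟩ : ↥(Set.range F)))
          (fun s => bb ⟨j, s⟩))) := by
      intro bb
      rw [hχ₂, Language.Formula.realize_iExs]
      apply exists_congr
      intro i
      rw [Language.Formula.realize_relabel]
      show Language.Formula.Realize χ₂' (fun x => Sum.elim (Sum.elim v bb) i (g x)) ↔ _
      have h0 : Language.Formula.Realize χ₂' (fun x => Sum.elim (Sum.elim v bb) i (g x)) ↔
          Language.BoundedFormula.Realize χ₂' (fun x => Sum.elim (Sum.elim v bb) i (g x))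
            default := Iff.rfl
      rw [h0, hχ₂', Language.BoundedFormula.realize_iInf]
      constructor
      · intro h j
        have h2 : Language.Formula.Realize
          ((φ j).relabel (Sum.elim
            (fun idx => Sum.inr (Sum.inr (⟨f j idx, ⟨⟨j, idx⟩, rfl⟩⟩ : ↥(Set.range F))))
            (fun s => Sum.inr (Sum.inl (⟨j, s⟩ : γ)))))
            (fun x => Sum.elim (Sum.elim v bb) i (g x)) := h j
        rw [Language.Formula.realize_relabel] at h2
        have heq : (fun x => Sum.elim (Sum.elim v bb) i (g x)) ∘ (Sum.elim
            (fun idx => Sum.inr (Sum.inr (⟨f j idx, ⟨⟨j, idx⟩, rfl⟩⟩ : ↥(Set.range F))))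
            (fun s => Sum.inr (Sum.inl (⟨j, s⟩ : γ))))
            = Sum.elim
              (fun idx : Fin (m j) => i (⟨f j idx, ⟨⟨j, idx⟩, rfl⟩⟩ : ↥(Set.range F)))
              (fun s => bb ⟨j, s⟩) := by
          funext x; cases x <;> rfl
        rwa [heq] at h2
      · intro h j
        show Language.Formula.Realize
          ((φ j).relabel (Sum.elim
            (fun idx => Sum.inr (Sum.inr (⟨f j idx, ⟨⟨j, idx⟩, rfl⟩⟩ : ↥(Set.range F))))
            (fun s => Sum.inr (Sum.inl (⟨j, s⟩ : γ)))))
            (fun x => Sum.elim (Sum.elim v bb) i (g x))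
        rw [Language.Formula.realize_relabel]
        have heq : (fun x => Sum.elim (Sum.elim v bb) i (g x)) ∘ (Sum.elim
            (fun idx => Sum.inr (Sum.inr (⟨f j idx, ⟨⟨j, idx⟩, rfl⟩⟩ : ↥(Set.range F))))
            (fun s => Sum.inr (Sum.inl (⟨j, s⟩ : γ))))
            = Sum.elim
              (fun idx : Fin (m j) => i (⟨f j idx, ⟨⟨j, idx⟩, rfl⟩⟩ : ↥(Set.range F)))
              (fun s => bb ⟨j, s⟩) := by
          funext x; cases x <;> rfl
        rw [heq]
        exact h j
    -- the transfer hypothesis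
    have htrans := transfer S χ₁ χ₂ v hvS ?_
    · -- apply transfer conclusion to the actual parameters
      set bb : γ → M := fun s => b s.1 s.2 with hbb
      have hχ₁holds : χ₁.Realize (Sum.elim v bb) := by
        rw [hχ₁real]
        intro j
        exact hmem j
      have := htrans bb hχ₁holds
      rw [hχ₂real] at this
      obtain ⟨i, hi⟩ := this
      refine ⟨fun t => if h : t ∈ Set.range F then i ⟨t, h⟩ else a t, ?_⟩
      intro j
      have hj := hi j
      have heq : (Sum.elim
          (fun idx : Fin (m j) => i (⟨f j idx, ⟨⟨j, idx⟩, rfl⟩⟩ : ↥(Set.range F)))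
          (fun s => bb ⟨j, s⟩))
          = Sum.elim ((fun t => if h : t ∈ Set.range F then i ⟨t, h⟩ else a t) ∘ f j) (b j) := by
        funext x
        cases x with
        | inl idx =>
          have hmem' : f j idx ∈ Set.range F := ⟨⟨j, idx⟩, rfl⟩
          simp only [Sum.elim_inl, Function.comp_apply, dif_pos hmem']
        | inr s => rfl
      rwa [heq] at hj
    · -- transfer hypothesis: on S-valued tuples
      intro bb hbbS hχ₁holds
      rw [hχ₁real] at hχ₁holds
      rw [hχ₂real]
      refine ⟨fun t => a t.1, ?_⟩
      intro j
      have := (hspec (m j) (n j) (f j) (φ j) (fun s => bb ⟨j, s⟩)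
        (fun s => hbbS ⟨j, s⟩)).mpr (hχ₁holds j)
      exact this
  · -- maximal
    intro m n f φ b
    set k₁ := kk m n f φ.not with hk₁
    set k₂ := kk m n f φ with hk₂
    set c₁ := cc m n f φ.not with hc₁
    set c₂ := cc m n f φ with hc₂
    set ψ₁ := ψψ m n f φ.not with hψ₁
    set ψ₂ := ψψ m n f φ with hψ₂
    set β := (Fin k₁ ⊕ Fin k₂) with hβ
    set v : β → M := Sum.elim c₁ c₂ with hv
    have hvS : ∀ i, v i ∈ S := by
      rintro (i | i)
      · exact hCS _ (hcc m n f φ.not i)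
      · exact hCS _ (hcc m n f φ i)
    set χ₁ : L.Formula (β ⊕ Fin n) := ψ₁.relabel (Sum.map Sum.inl id) with hχ₁
    set χ₂ : L.Formula (β ⊕ Fin n) := (ψ₂.relabel (Sum.map Sum.inr id)).not with hχ₂
    have hr₁ : ∀ bb : Fin n → M, (χ₁.Realize (Sum.elim v bb) ↔ ψ₁.Realize (Sum.elim c₁ bb)) := by
      intro bb
      rw [hχ₁, Language.Formula.realize_relabel]
      have heq : (Sum.elim v bb) ∘ (Sum.map Sum.inl id) = Sum.elim c₁ bb := by
        funext x; cases x <;> rfl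
      rw [heq]
    have hr₂ : ∀ bb : Fin n → M, (χ₂.Realize (Sum.elim v bb) ↔ ¬ ψ₂.Realize (Sum.elim c₂ bb)) := by
      intro bb
      rw [hχ₂, Language.Formula.realize_not, Language.Formula.realize_relabel]
      have heq : (Sum.elim v bb) ∘ (Sum.map Sum.inr id) = Sum.elim c₂ bb := by
        funext x; cases x <;> rfl
      rw [heq]
    have hdir1 : ∀ bb : Fin n → M, χ₁.Realize (Sum.elim v bb) → χ₂.Realize (Sum.elim v bb) := by
      refine transfer S χ₁ χ₂ v hvS ?_
      intro bb hbbS h1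
      rw [hr₁] at h1
      rw [hr₂]
      have hnotreal := (hspec m n f φ.not bb hbbS).mpr h1
      rw [Language.Formula.realize_not] at hnotreal
      intro h2
      exact hnotreal ((hspec m n f φ bb hbbS).mpr h2)
    have hdir2 : ∀ bb : Fin n → M, χ₂.Realize (Sum.elim v bb) → χ₁.Realize (Sum.elim v bb) := by
      refine transfer S χ₂ χ₁ v hvS ?_
      intro bb hbbS h2
      rw [hr₂] at h2
      rw [hr₁]
      refine (hspec m n f φ.not bb hbbS).mp ?_
      rw [Language.Formula.realize_not]
      intro hφ
      exact h2 ((hspec m n f φ bb hbbS).mp hφ)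
    constructor
    · intro h1
      have := hdir1 b ((hr₁ b).mpr h1)
      exact (hr₂ b).mp this
    · intro h2
      have := hdir2 b ((hr₂ b).mpr h2)
      exact (hr₁ b).mp this
  · -- CDefinable
    intro m n f φ
    exact ⟨kk m n f φ, cc m n f φ, ψψ m n f φ, hcc m n f φ, fun b => Iff.rfl⟩
  · -- ExtendsTp
    intro m n f φ b hb hreal
    exact (hspec m n f φ b (fun i => hsub (hb i))).mp hreal
lemma finite_elementary_top (S : L.ElementarySubstructure M)
    (hfin : Finite S) (x : M) : x ∈ S := by
  classical
  have : Fintype S := Fintype.ofFinite S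
  set n := Fintype.card S with hn
  let e : Fin n ≃ S := (Fintype.equivFin S).symm
  let χ : L.Formula (Fin n ⊕ Fin 1) :=
    FirstOrder.Language.BoundedFormula.iSup fun i : Fin n =>
      Language.Term.equal (Language.Term.var (Sum.inr (0 : Fin 1))) (Language.Term.var (Sum.inl i))
  let σ : L.Formula (Fin n) := χ.iAlls (Fin 1)
  have h2 : σ.Realize (fun i => e i) := by
    rw [Language.Formula.realize_iAlls]
    intro i
    show Language.BoundedFormula.Realize χ _ default
    rw [Language.BoundedFormula.realize_iSup]
    refine ⟨e.symm (i 0), ?_⟩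
    show Language.Formula.Realize (Language.Term.equal _ _) _
    rw [Language.Formula.realize_equal]
    simp [Language.Term.realize_var]
  have h3 : σ.Realize (((↑) : S → M) ∘ fun i => e i) := (realize_sub S σ _).mpr h2
  rw [Language.Formula.realize_iAlls] at h3
  have h4 := h3 (fun _ => x)
  have h5 : Language.BoundedFormula.Realize χ (fun a => Sum.elim (((↑) : S → M) ∘ fun i => e i) (fun _ => x) (id a)) default := h4
  rw [Language.BoundedFormula.realize_iSup] at h5
  obtain ⟨b, hb⟩ := h5
  have hb' : x = ((e b : S) : M) := by
    have := (Language.Formula.realize_equal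
      (t₁ := (Language.Term.var (Sum.inr (0 : Fin 1)) : L.Term (Fin n ⊕ Fin 1)))
      (t₂ := Language.Term.var (Sum.inl b))
      (x := fun a => Sum.elim (((↑) : S → M) ∘ fun i => e i) (fun _ => x) (id a))).mp hb
    simpa using this
  rw [hb']
  exact (e b).2

lemma small_union (κ : Cardinal.{u})
    (hLS : ∀ E : Set M, #E < κ → ∃ S : L.ElementarySubstructure M,
      E ⊆ (S : L.Substructure M) ∧ #((S : L.Substructure M) : Set M) < κ)
    {X Y : Set M} (hX : #X < κ) (hY : #Y < κ) : #(X ∪ Y : Set M) < κ := by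
  rcases le_or_gt ℵ₀ κ with hκ | hκ
  · exact lt_of_le_of_lt (Cardinal.mk_union_le X Y) (Cardinal.add_lt_of_lt hκ hX hY)
  · obtain ⟨S, hXS, hS⟩ := hLS X hX
    have hfin : Finite S := by
      have : #((S : L.Substructure M) : Set M) < ℵ₀ := hS.trans hκ
      rw [Cardinal.lt_aleph0_iff_finite] at this
      exact this
    have htop : ∀ x : M, x ∈ (S : L.Substructure M) := fun x => finite_elementary_top S hfin x
    exact lt_of_le_of_lt (Cardinal.mk_le_mk_of_subset fun x _ => htop x) hS

lemma one_two (κ : Cardinal.{u})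
    (hsat : ∀ (J : Type u), #J < κ → ∀ E : Set M, #E < κ →
      ∀ p : GlobalType L M J, ∃ a : J → M, p.RlzOn a E)
    (hsu : ∀ {X Y : Set M}, #X < κ → #Y < κ → #(X ∪ Y : Set M) < κ)
    {ι : Type u} (hι : #ι < κ) (a : ι → M) (B C : Set M) (hB : #B < κ) (hC : #C < κ)
    (h1 : Indep1 L a C B) :
    ∀ (J : Type u) (d : J → M), #J < κ →
      ∃ a' : ι → M, EqTp L a' a (B ∪ C) ∧ TpDef L a' (B ∪ C ∪ Set.range d) C := by
  obtain ⟨p, hdef, hext⟩ := h1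
  intro J d hJ
  have hE : #(B ∪ C ∪ Set.range d : Set M) < κ :=
    hsu (hsu hB hC) (lt_of_le_of_lt Cardinal.mk_range_le hJ)
  obtain ⟨a', ha'⟩ := hsat ι hι _ hE p
  have hmem : ∀ m n f (φ : L.Formula (Fin m ⊕ Fin n)) (b : Fin n → M),
      (∀ i, b i ∈ B ∪ C ∪ Set.range d) →
      (p.mem m n f φ b ↔ φ.Realize (Sum.elim (a' ∘ f) b)) := by
    intro m n f φ b hb
    constructor
    · exact ha' m n f φ b hb
    · intro hr
      by_contra hnot
      have hnn : p.mem m n f φ.not b := (p.maximal m n f φ b).mpr hnot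
      have := ha' m n f φ.not b hb hnn
      rw [Language.Formula.realize_not] at this
      exact this hr
  refine ⟨a', ?_, ?_⟩
  · intro m n f φ b hb
    have hb' : ∀ i, b i ∈ B ∪ C ∪ Set.range d := fun i => Or.inl (hb i)
    constructor
    · intro h
      by_contra hna
      have h1 : φ.not.Realize (Sum.elim (a ∘ f) b) := by
        rw [Language.Formula.realize_not]; exact hna
      have h2 := (hmem m n f φ.not b hb').mp (hext m n f φ.not b hb h1)
      rw [Language.Formula.realize_not] at h2
      exact h2 h
    · intro h
      exact (hmem m n f φ b hb').mp (hext m n f φ b hb h)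
  · intro m n f φ
    obtain ⟨k, c, ψ, hc, hψ⟩ := hdef m n f φ
    exact ⟨k, c, ψ, hc, fun b hb => ((hmem m n f φ b hb).symm.trans (hψ b))⟩

lemma two_three (κ : Cardinal.{u})
    (hhom : ∀ (J J' : Type u), #J < κ → #J' < κ → ∀ E : Set M, #E < κ →
      ∀ (x y : J → M) (w : J' → M), EqTp L x y E →
        ∃ w' : J' → M, EqTp L (Sum.elim x w) (Sum.elim y w') E)
    (hsu : ∀ {X Y : Set M}, #X < κ → #Y < κ → #(X ∪ Y : Set M) < κ)
    {ι : Type u} (hι : #ι < κ) (a : ι → M) (B C : Set M) (hB : #B < κ) (hC : #C < κ)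
    (h2 : ∀ (J : Type u) (d : J → M), #J < κ →
      ∃ a' : ι → M, EqTp L a' a (B ∪ C) ∧ TpDef L a' (B ∪ C ∪ Set.range d) C) :
    ∀ (J : Type u) (d : J → M), #J < κ →
      ∃ d' : J → M, EqTp L d' d (B ∪ C) ∧ TpDef L a (B ∪ C ∪ Set.range d') C := by
  intro J d hJ
  obtain ⟨a', haa, hdef⟩ := h2 J d hJ
  obtain ⟨d', hbig⟩ := hhom ι J hι hJ (B ∪ C) (hsu hB hC) a' a d haa
  refine ⟨d', ?_, ?_⟩
  · intro m n f φ b hb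
    exact (hbig m n (Sum.inr ∘ f) φ b hb).symm
  · intro m n f φ
    obtain ⟨k, c, ψ, hc, hψ⟩ := hdef m n f φ
    refine ⟨k, c, ψ, hc, ?_⟩
    intro b hb
    classical
    set P : Fin n → Prop := fun i => b i ∈ B ∪ C with hP
    have hj : ∀ i : {i : Fin n // ¬ P i}, ∃ jx : J, d' jx = b i.1 := by
      rintro ⟨i, hPi⟩
      rcases hb i with h | h
      · exact absurd h hPi
      · exact h
    choose jj hjj using hj
    set n' := Fintype.card {i : Fin n // P i} with hn'
    set m₂ := Fintype.card {i : Fin n // ¬ P i} with hm₂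
    set e : {i : Fin n // P i} ≃ Fin n' := Fintype.equivFin _ with he
    set e₂ : {i : Fin n // ¬ P i} ≃ Fin m₂ := Fintype.equivFin _ with he₂
    set btil : Fin n → M := fun i => if h : P i then b i else d (jj ⟨i, h⟩) with hbtil
    -- first transfer : φ(a, b) ↔ φ(a', btil)
    have main1 : φ.Realize (Sum.elim (a ∘ f) b) ↔ φ.Realize (Sum.elim (a' ∘ f) btil) := by
      set ρ : Fin m ⊕ Fin n → Fin (m + m₂) ⊕ Fin n' :=
        Sum.elim (fun i => Sum.inl (Fin.castAdd m₂ i))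
          (fun i => if h : P i then Sum.inr (e ⟨i, h⟩)
            else Sum.inl (Fin.natAdd m (e₂ ⟨i, h⟩))) with hρ
      set f' : Fin (m + m₂) → ι ⊕ J :=
        Fin.addCases (fun i => Sum.inl (f i)) (fun s => Sum.inr (jj (e₂.symm s))) with hf'
      set b' : Fin n' → M := fun s => b (e.symm s).1 with hb'
      have hb'mem : ∀ s, b' s ∈ B ∪ C := fun s => (e.symm s).2
      have step1 := hbig (m + m₂) n' f' (φ.relabel ρ) b' hb'mem
      rw [Language.Formula.realize_relabel, Language.Formula.realize_relabel] at step1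
      have hA : (Sum.elim ((Sum.elim a' d) ∘ f') b') ∘ ρ = Sum.elim (a' ∘ f) btil := by
        funext x
        cases x with
        | inl i => simp [hρ, hf', Fin.addCases_left]
        | inr i =>
          by_cases h : P i
          · simp [hρ, hf', hb', hbtil, h]
          · simp [hρ, hf', hb', hbtil, h, Fin.addCases_right]
      have hB' : (Sum.elim ((Sum.elim a d') ∘ f') b') ∘ ρ = Sum.elim (a ∘ f) b := by
        funext x
        cases x with
        | inl i => simp [hρ, hf', Fin.addCases_left]
        | inr i =>
          by_cases h : P i
          · simp [hρ, hf', hb', h]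
          · simp [hρ, hf', hb', h, Fin.addCases_right, hjj ⟨i, h⟩]
      rw [hA, hB'] at step1
      exact step1.symm
    have hbtilmem : ∀ i, btil i ∈ B ∪ C ∪ Set.range d := by
      intro i
      by_cases h : P i
      · simp only [hbtil, dif_pos h]; exact Or.inl h
      · simp only [hbtil, dif_neg h]; exact Or.inr ⟨jj ⟨i, h⟩, rfl⟩
    have main2 : φ.Realize (Sum.elim (a' ∘ f) btil) ↔ ψ.Realize (Sum.elim c btil) :=
      hψ btil hbtilmem
    have main3 : ψ.Realize (Sum.elim c btil) ↔ ψ.Realize (Sum.elim c b) := by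
      set ρ₂ : Fin k ⊕ Fin n → Fin m₂ ⊕ Fin (k + n') :=
        Sum.elim (fun i => Sum.inr (Fin.castAdd n' i))
          (fun i => if h : P i then Sum.inr (Fin.natAdd k (e ⟨i, h⟩))
            else Sum.inl (e₂ ⟨i, h⟩)) with hρ₂
      set f₂ : Fin m₂ → ι ⊕ J := fun s => Sum.inr (jj (e₂.symm s)) with hf₂
      set b₂ : Fin (k + n') → M := Fin.addCases c (fun s => b (e.symm s).1) with hb₂
      have hb₂mem : ∀ s, b₂ s ∈ B ∪ C := by
        refine Fin.addCases ?_ ?_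
        · intro i; simp only [hb₂, Fin.addCases_left]; exact Or.inr (hc i)
        · intro s; simp only [hb₂, Fin.addCases_right]; exact (e.symm s).2
      have step2 := hbig m₂ (k + n') f₂ (ψ.relabel ρ₂) b₂ hb₂mem
      rw [Language.Formula.realize_relabel, Language.Formula.realize_relabel] at step2
      have hA : (Sum.elim ((Sum.elim a' d) ∘ f₂) b₂) ∘ ρ₂ = Sum.elim c btil := by
        funext x
        cases x with
        | inl i => simp [hρ₂, hb₂, Fin.addCases_left]
        | inr i =>
          by_cases h : P i
          · simp [hρ₂, hb₂, hbtil, h, Fin.addCases_right]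
          · simp [hρ₂, hf₂, hbtil, h]
      have hB' : (Sum.elim ((Sum.elim a d') ∘ f₂) b₂) ∘ ρ₂ = Sum.elim c b := by
        funext x
        cases x with
        | inl i => simp [hρ₂, hb₂, Fin.addCases_left]
        | inr i =>
          by_cases h : P i
          · simp [hρ₂, hb₂, h, Fin.addCases_right]
          · simp [hρ₂, hf₂, h, hjj ⟨i, h⟩]
      rw [hA, hB'] at step2
      exact step2
    exact main1.trans (main2.trans main3)

lemma three_four (κ : Cardinal.{u})
    (hLS : ∀ E : Set M, #E < κ → ∃ S : L.ElementarySubstructure M,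
      E ⊆ (S : L.Substructure M) ∧ #((S : L.Substructure M) : Set M) < κ)
    (hsu : ∀ {X Y : Set M}, #X < κ → #Y < κ → #(X ∪ Y : Set M) < κ)
    {ι : Type u} (hι : #ι < κ) (a : ι → M) (B C : Set M) (hB : #B < κ) (hC : #C < κ)
    (h3 : ∀ (J : Type u) (d : J → M), #J < κ →
      ∃ d' : J → M, EqTp L d' d (B ∪ C) ∧ TpDef L a (B ∪ C ∪ Set.range d') C) :
    ∃ S : L.ElementarySubstructure M, B ∪ C ⊆ (S : L.Substructure M) ∧
      #((S : L.Substructure M) : Set M) < κ ∧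
      TpDef L a ((S : L.Substructure M) : Set M) C := by
  obtain ⟨S, hsub, hS⟩ := hLS (B ∪ C) (hsu hB hC)
  set J : Type u := ↥(S : L.Substructure M) with hJ
  have hJκ : #J < κ := hS
  obtain ⟨d', hd'd, hdef⟩ := h3 J (Subtype.val) hJκ
  -- d' fixes B ∪ C pointwise
  have hfix : ∀ u : J, (u : M) ∈ B ∪ C → d' u = (u : M) := by
    intro u hu
    have := hd'd 1 1 (fun _ => u)
      (Language.Term.equal (Language.Term.var (Sum.inl 0)) (Language.Term.var (Sum.inr 0)))
      (fun _ => (u : M)) (fun _ => hu)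
    rw [Language.Formula.realize_equal, Language.Formula.realize_equal] at this
    simpa using this
  -- d' is an elementary embedding J → M
  have hmapf : ∀ {n : ℕ} (φ : L.Formula (Fin n)) (x : Fin n → J),
      φ.Realize (d' ∘ x) ↔ φ.Realize x := by
    intro n φ x
    have t1 : φ.Realize (d' ∘ x) ↔ φ.Realize (((↑) : J → M) ∘ x) := by
      have := hd'd n 0 x (φ.relabel Sum.inl) (fun i => i.elim0) (fun i => i.elim0)
      rw [Language.Formula.realize_relabel, Language.Formula.realize_relabel] at this
      have e1 : (Sum.elim (d' ∘ x) (fun i : Fin 0 => i.elim0)) ∘ Sum.inl = d' ∘ x := rfl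
      have e2 : (Sum.elim (((↑) : J → M) ∘ x) (fun i : Fin 0 => i.elim0)) ∘ Sum.inl
          = ((↑) : J → M) ∘ x := rfl
      rw [e1, e2] at this
      exact this
    exact t1.trans (S.isElementary φ x)
  let h' : J ↪ₑ[L] M := ⟨d', fun {n} φ x => hmapf φ x⟩
  let f : J ↪[L] M := h'.toEmbedding
  let T₀ : L.Substructure M := f.toHom.range
  let e : J ≃[L] T₀ := f.equivRange
  have hcarrier : (T₀ : Set M) = Set.range d' := by
    ext x
    simp only [T₀, Language.Hom.range_coe]
    rfl
  have hTelem : T₀.IsElementary := by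
    intro n φ x
    let x' : Fin n → J := fun i => e.symm (x i)
    have hex : ∀ i, (x i : M) = d' (x' i) := by
      intro i
      have : e (e.symm (x i)) = x i := e.toEquiv.apply_symm_apply (x i)
      calc (x i : M) = ((e (e.symm (x i)) : T₀) : M) := by rw [this]
        _ = f (e.symm (x i)) := rfl
        _ = d' (x' i) := rfl
    have t1 : φ.Realize (((↑) : T₀ → M) ∘ x) ↔ φ.Realize (d' ∘ x') := by
      have : ((↑) : T₀ → M) ∘ x = d' ∘ x' := by funext i; exact hex i
      rw [this]
    have t2 : φ.Realize (d' ∘ x') ↔ φ.Realize x' := hmapf φ x'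
    have t3 : φ.Realize x' ↔ φ.Realize x := by
      have := Language.StrongHomClass.realize_formula e (φ := φ) (v := x')
      have hx : (⇑e) ∘ x' = x := by
        funext i; exact e.toEquiv.apply_symm_apply (x i)
      rw [hx] at this
      exact this.symm
    exact t1.trans (t2.trans t3)
  refine ⟨⟨T₀, hTelem⟩, ?_, ?_, ?_⟩
  · intro x hx
    have hxS : x ∈ (S : L.Substructure M) := hsub hx
    have : d' ⟨x, hxS⟩ = x := hfix ⟨x, hxS⟩ hx
    show x ∈ T₀
    rw [← SetLike.mem_coe, hcarrier]
    exact ⟨⟨x, hxS⟩, this⟩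
  · show #((T₀ : Set M)) < κ
    rw [hcarrier]
    exact lt_of_le_of_lt Cardinal.mk_range_le hJκ
  · intro m n φf φ
    obtain ⟨k, c, ψ, hc, hψ⟩ := hdef m n φf φ
    refine ⟨k, c, ψ, hc, ?_⟩
    intro b hb
    refine hψ b (fun i => ?_)
    have : b i ∈ (T₀ : Set M) := hb i
    rw [hcarrier] at this
    exact Or.inr this

end Stmt9

theorem stmt9 {L : FirstOrder.Language.{v, w}} {M : Type u} [L.Structure M]
    (κ : Cardinal.{u})
    -- monster hypotheses: saturation, homogeneity, downward Löwenheim–Skolem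
    (hsat : ∀ (J : Type u), #J < κ → ∀ E : Set M, #E < κ →
      ∀ p : GlobalType L M J, ∃ a : J → M, p.RlzOn a E)
    (hhom : ∀ (J J' : Type u), #J < κ → #J' < κ → ∀ E : Set M, #E < κ →
      ∀ (x y : J → M) (w : J' → M), EqTp L x y E →
        ∃ w' : J' → M, EqTp L (Sum.elim x w) (Sum.elim y w') E)
    (hLS : ∀ E : Set M, #E < κ → ∃ S : L.ElementarySubstructure M,
      E ⊆ (S : L.Substructure M) ∧ #((S : L.Substructure M) : Set M) < κ)
    {ι : Type u} (hι : #ι < κ) (a : ι → M)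
    (B C : Set M) (hB : #B < κ) (hC : #C < κ) :
    (Indep1 L a C B ↔
      ∀ (J : Type u) (d : J → M), #J < κ →
        ∃ a' : ι → M, EqTp L a' a (B ∪ C) ∧ TpDef L a' (B ∪ C ∪ Set.range d) C) ∧
    (Indep1 L a C B ↔
      ∀ (J : Type u) (d : J → M), #J < κ →
        ∃ d' : J → M, EqTp L d' d (B ∪ C) ∧ TpDef L a (B ∪ C ∪ Set.range d') C) ∧
    (Indep1 L a C B ↔
      ∃ S : L.ElementarySubstructure M, B ∪ C ⊆ (S : L.Substructure M) ∧
        #((S : L.Substructure M) : Set M) < κ ∧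
        TpDef L a ((S : L.Substructure M) : Set M) C) := by
  have hsu : ∀ {X Y : Set M}, #X < κ → #Y < κ → #(X ∪ Y : Set M) < κ :=
    fun {X Y} hX hY => Stmt9.small_union κ hLS hX hY
  have i12 := Stmt9.one_two κ hsat (fun {X Y} hX hY => hsu hX hY) hι a B C hB hC
  have i23 := Stmt9.two_three κ hhom (fun {X Y} hX hY => hsu hX hY) hι a B C hB hC
  have i34 := Stmt9.three_four κ hLS (fun {X Y} hX hY => hsu hX hY) hι a B C hB hC
  have i41 := Stmt9.four_one (L := L) κ a B C
  refine ⟨⟨i12, fun h2 => i41 (i34 (i23 h2))⟩,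
    ⟨fun h1 => i23 (i12 h1), fun h3 => i41 (i34 h3)⟩,
    ⟨fun h1 => i34 (i23 (i12 h1)), fun h4 => i41 h4⟩⟩
end

section
/- The relation ⫝¹ satisfies left-transitivity: if a₁ ⫝¹_C B and a₂ ⫝¹_{C a₁} B, then a₂a₁ ⫝¹_C B. -/
/- STATEMENT 10: The relation ⫝¹ satisfies left-transitivity: if a₁ ⫝¹_C B and
a₂ ⫝¹_{C a₁} B, then a₂a₁ ⫝¹_C B.  Here a ⫝¹_C B means tp(a/BC) extends to a
global C-definable type, in the monster model (axiomatized by saturation,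
homogeneity and Löwenheim–Skolem hypotheses relative to κ). -/

open FirstOrder Cardinal

universe u v w

namespace S10

open FirstOrder.Language

lemma getLeft_eq {α β : Type*} {x : α ⊕ β} {u : α} (hu : x = .inl u) (h : x.isLeft) :
    x.getLeft h = u := by subst hu; rfl

lemma getRight_eq {α β : Type*} {x : α ⊕ β} {u : β} (hu : x = .inr u) (h : x.isRight) :
    x.getRight h = u := by subst hu; rfl

/-- dependent cons for `Fin`-indexed families, with good definitional reduction -/
def famCons {N : ℕ} {α : Fin (N + 1) → Sort*} (x : α ⟨0, Nat.succ_pos N⟩)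
    (f : ∀ j : Fin N, α j.succ) : ∀ j, α j := fun j =>
  match j with
  | ⟨0, _⟩ => x
  | ⟨i + 1, h⟩ => f ⟨i, Nat.lt_of_succ_lt_succ h⟩

lemma famCons_succ {N : ℕ} {α : Fin (N + 1) → Sort*} (x : α ⟨0, Nat.succ_pos N⟩)
    (f : ∀ j : Fin N, α j.succ) (j : Fin N) : famCons x f j.succ = f j := rfl


def cN {N : ℕ} (m₀ : ℕ) (m : Fin N → ℕ) : Fin (N + 1) → ℕ := famCons m₀ m

def cF {γ : Type*} {m₀ : ℕ} {N : ℕ} {m : Fin N → ℕ} (f₀ : Fin m₀ → γ)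
    (f : ∀ j, Fin (m j) → γ) : ∀ j, Fin (cN m₀ m j) → γ :=
  famCons (α := fun j => Fin (cN m₀ m j) → γ) f₀ f

def cΦ {L : FirstOrder.Language.{v, w}} {m₀ n₀ : ℕ} {N : ℕ} {m n : Fin N → ℕ}
    (φ₀ : L.Formula (Fin m₀ ⊕ Fin n₀)) (φ : ∀ j, L.Formula (Fin (m j) ⊕ Fin (n j))) :
    ∀ j, L.Formula (Fin (cN m₀ m j) ⊕ Fin (cN n₀ n j)) :=
  famCons (α := fun j => L.Formula (Fin (cN m₀ m j) ⊕ Fin (cN n₀ n j))) φ₀ φ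

variable {L : FirstOrder.Language.{v, w}} {M : Type u} [L.Structure M] {ι : Type u}

/-- evaluate a slot-assignment `v` (each slot a variable in `ι` or a parameter in `M`)
at a tuple `x`. -/
def ev (x : ι → M) {α : Type*} (v : α → ι ⊕ M) : α → M := fun t => Sum.elim x id (v t)

section memL

variable {K : ℕ} (v : Fin K → ι ⊕ M)

noncomputable def nVar : ℕ := Fintype.card {t : Fin K // (v t).isLeft}

noncomputable def nPar : ℕ := Fintype.card {t : Fin K // (v t).isRight}

noncomputable def eVar : {t : Fin K // (v t).isLeft} ≃ Fin (nVar v) := Fintype.equivFin _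

noncomputable def ePar : {t : Fin K // (v t).isRight} ≃ Fin (nPar v) := Fintype.equivFin _

noncomputable def fL : Fin (nVar v) → ι :=
  fun j => (v ((eVar v).symm j).1).getLeft ((eVar v).symm j).2

noncomputable def bL : Fin (nPar v) → M :=
  fun j => (v ((ePar v).symm j).1).getRight ((ePar v).symm j).2

noncomputable def rL : Fin K → Fin (nVar v) ⊕ Fin (nPar v) := fun t =>
  if h : (v t).isLeft then .inl (eVar v ⟨t, h⟩)
  else .inr (ePar v ⟨t, Sum.not_isLeft.mp h⟩)

lemma elim_comp_rL (x : ι → M) (t : Fin K) :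
    Sum.elim (x ∘ fL v) (bL v) (rL v t) = ev x v t := by
  rw [rL]
  by_cases h : (v t).isLeft
  · rw [dif_pos h]
    obtain ⟨u, hu⟩ := Sum.isLeft_iff.mp h
    simp only [Sum.elim_inl, Function.comp_apply, fL, Equiv.symm_apply_apply, ev]
    rw [getLeft_eq hu, hu]
    rfl
  · rw [dif_neg h]
    obtain ⟨u, hu⟩ := Sum.isRight_iff.mp (Sum.not_isLeft.mp h)
    simp only [Sum.elim_inr, bL, Equiv.symm_apply_apply, ev]
    rw [getRight_eq hu, hu]
    rfl

lemma bL_mem {E : Set M} (hpar : ∀ t mv, v t = .inr mv → mv ∈ E) : ∀ j, bL v j ∈ E := by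
  intro j
  obtain ⟨u, hu⟩ := Sum.isRight_iff.mp ((ePar v).symm j).2
  rw [bL, getRight_eq hu]
  exact hpar _ _ hu

lemma realize_compress (χ : L.Formula (Fin K)) (x : ι → M) :
    (χ.relabel (rL v)).Realize (Sum.elim (x ∘ fL v) (bL v)) ↔ χ.Realize (ev x v) := by
  rw [Formula.realize_relabel]
  exact iff_of_eq (congrArg _ (funext fun t => elim_comp_rL v x t))

end memL

end S10

open S10 FirstOrder.Language

/-- membership of a slot-formula in a global type -/
noncomputable def GlobalType.memL {L : FirstOrder.Language.{v, w}} {M : Type u}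
    [L.Structure M] {ι : Type u} (p : GlobalType L M ι) {K : ℕ} (χ : L.Formula (Fin K))
    (v : Fin K → ι ⊕ M) : Prop :=
  p.mem (nVar v) (nPar v) (fL v) (χ.relabel (rL v)) (bL v)

section GT

variable {L : FirstOrder.Language.{v, w}} {M : Type u} [L.Structure M] {ι : Type u}

/-- closure of a global type under semantic consequence -/
lemma GlobalType.mem_closure (p : GlobalType L M ι) {N : ℕ} {m n : Fin N → ℕ}
    {f : ∀ j, Fin (m j) → ι} {φ : ∀ j, L.Formula (Fin (m j) ⊕ Fin (n j))}
    {b : ∀ j, Fin (n j) → M}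
    (h : ∀ j, p.mem _ _ (f j) (φ j) (b j))
    {m₀ n₀ : ℕ} {f₀ : Fin m₀ → ι} {φ₀ : L.Formula (Fin m₀ ⊕ Fin n₀)} {b₀ : Fin n₀ → M}
    (himp : ∀ x : ι → M, (∀ j, (φ j).Realize (Sum.elim (x ∘ f j) (b j))) →
      φ₀.Realize (Sum.elim (x ∘ f₀) b₀)) :
    p.mem m₀ n₀ f₀ φ₀ b₀ := by
  by_contra hc
  rw [← p.maximal] at hc
  have key : ∃ x : ι → M, ∀ j : Fin (N + 1),
      ((cΦ φ₀.not φ) j).Realize (Sum.elim (x ∘ cF f₀ f j) (cF b₀ b j)) := by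
    apply p.finSat (N + 1) (cN m₀ m) (cN n₀ n)
    intro j
    match j with
    | ⟨0, _⟩ => exact hc
    | ⟨i + 1, hi⟩ => exact h ⟨i, Nat.lt_of_succ_lt_succ hi⟩
  obtain ⟨x, hx⟩ := key
  have h0 : φ₀.not.Realize (Sum.elim (x ∘ f₀) b₀) := hx ⟨0, Nat.succ_pos N⟩
  have hs : ∀ j : Fin N, (φ j).Realize (Sum.elim (x ∘ f j) (b j)) := fun j => hx j.succ
  rw [Formula.realize_not] at h0
  exact h0 (himp x hs)

lemma GlobalType.memL_closure (p : GlobalType L M ι) {N : ℕ} {K : Fin N → ℕ}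
    {χ : ∀ j, L.Formula (Fin (K j))} {v : ∀ j, Fin (K j) → ι ⊕ M}
    (h : ∀ j, p.memL (χ j) (v j))
    {K₀ : ℕ} {χ₀ : L.Formula (Fin K₀)} {v₀ : Fin K₀ → ι ⊕ M}
    (himp : ∀ x : ι → M, (∀ j, (χ j).Realize (ev x (v j))) → χ₀.Realize (ev x v₀)) :
    p.memL χ₀ v₀ := by
  refine p.mem_closure h ?_
  intro x hx
  rw [realize_compress]
  exact himp x fun j => (realize_compress (v j) (χ j) x).mp (hx j)

/-- if `a` realizes `χ` under `v` and all parameters of `v` lie in `E`,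
then `χ,v` belongs to any global type extending `tp(a/E)`. -/
lemma GlobalType.memL_of_extends (p : GlobalType L M ι) {a : ι → M} {E : Set M}
    (hext : ∀ (m n : ℕ) (f : Fin m → ι) (φ : L.Formula (Fin m ⊕ Fin n)) (b : Fin n → M),
      (∀ i, b i ∈ E) → φ.Realize (Sum.elim (a ∘ f) b) → p.mem m n f φ b)
    {K : ℕ} {χ : L.Formula (Fin K)} {v : Fin K → ι ⊕ M}
    (hpar : ∀ t mv, v t = .inr mv → mv ∈ E) (hreal : χ.Realize (ev a v)) :
    p.memL χ v :=
  hext _ _ _ _ _ (bL_mem v hpar) ((realize_compress v χ a).mpr hreal)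

/-- a finite family of `memL`'s is simultaneously realizable -/
lemma GlobalType.memL_finSat (p : GlobalType L M ι) {N : ℕ} {K : Fin N → ℕ}
    {χ : ∀ j, L.Formula (Fin (K j))} {v : ∀ j, Fin (K j) → ι ⊕ M}
    (h : ∀ j, p.memL (χ j) (v j)) :
    ∃ x : ι → M, ∀ j, (χ j).Realize (ev x (v j)) := by
  obtain ⟨x, hx⟩ := p.finSat N _ _ _ _ _ h
  exact ⟨x, fun j => (realize_compress (v j) (χ j) x).mp (hx j)⟩

end GT

namespace S10

section Transform

variable {L : FirstOrder.Language.{v, w}} {M : Type u} [L.Structure M] {ι₁ ι₂ : Type u}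

lemma comp_append {α β : Type*} {m n : ℕ} (g : α → β) (a : Fin m → α) (b : Fin n → α) :
    g ∘ Fin.append a b = Fin.append (g ∘ a) (g ∘ b) := by
  funext t
  refine Fin.addCases (fun i => ?_) (fun j => ?_) t <;>
    simp [Fin.append_left, Fin.append_right]

lemma ev_sum {α β : Type*} {ι : Type u} (x : ι → M) (v₁ : α → ι ⊕ M) (v₂ : β → ι ⊕ M) :
    ev x (Sum.elim v₁ v₂) = Sum.elim (ev x v₁) (ev x v₂) := by
  funext t; cases t <;> rfl

lemma realize_relabel_equiv {α β : Type*} (e : α ≃ β) (χ : L.Formula α) (w : β → M) :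
    (χ.relabel e).Realize w ↔ χ.Realize (w ∘ e) :=
  FirstOrder.Language.Formula.realize_relabel

variable {m : ℕ} (f : Fin m → ι₂ ⊕ ι₁)

noncomputable def mLive : ℕ := Fintype.card {i : Fin m // (f i).isLeft}
noncomputable def mDead : ℕ := Fintype.card {i : Fin m // (f i).isRight}
noncomputable def eLive : {i : Fin m // (f i).isLeft} ≃ Fin (mLive f) := Fintype.equivFin _
noncomputable def eDead : {i : Fin m // (f i).isRight} ≃ Fin (mDead f) := Fintype.equivFin _

noncomputable def fLive : Fin (mLive f) → ι₂ :=
  fun j => (f ((eLive f).symm j).1).getLeft ((eLive f).symm j).2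

noncomputable def gT (n : ℕ) : Fin m ⊕ Fin n → Fin (mLive f) ⊕ Fin (mDead f + n) :=
  Sum.elim
    (fun i => if h : (f i).isLeft then .inl (eLive f ⟨i, h⟩)
      else .inr (Fin.castAdd n (eDead f ⟨i, Sum.not_isLeft.mp h⟩)))
    (fun j => .inr (Fin.natAdd (mDead f) j))

noncomputable def hatφ {n : ℕ} (φ : L.Formula (Fin m ⊕ Fin n)) :
    L.Formula (Fin (mLive f) ⊕ Fin (mDead f + n)) := φ.relabel (gT f n)

/-- dead-slot indices -/
noncomputable def dIdx : Fin (mDead f) → ι₁ :=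
  fun jd => (f ((eDead f).symm jd).1).getRight ((eDead f).symm jd).2

/-- full parameter tuple for the transformed formula -/
noncomputable def Bfull (x₁ : ι₁ → M) {n : ℕ} (b : Fin n → M) : Fin (mDead f + n) → M :=
  Fin.append (x₁ ∘ dIdx f) b

lemma realize_hat {n : ℕ} (φ : L.Formula (Fin m ⊕ Fin n)) (x₂ : ι₂ → M) (x₁ : ι₁ → M)
    (b : Fin n → M) :
    (hatφ f φ).Realize (Sum.elim (x₂ ∘ fLive f) (Bfull f x₁ b)) ↔
      φ.Realize (Sum.elim (Sum.elim x₂ x₁ ∘ f) b) := by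
  rw [hatφ, Formula.realize_relabel]
  refine iff_of_eq (congrArg _ (funext fun s => ?_))
  cases s with
  | inl i =>
    show Sum.elim (x₂ ∘ fLive f) (Bfull f x₁ b) (gT f n (.inl i)) = Sum.elim x₂ x₁ (f i)
    rw [gT, Sum.elim_inl]
    by_cases h : (f i).isLeft
    · rw [dif_pos h]
      obtain ⟨u, hu⟩ := Sum.isLeft_iff.mp h
      simp only [Sum.elim_inl, Function.comp_apply, fLive, Equiv.symm_apply_apply]
      rw [getLeft_eq hu, hu, Sum.elim_inl]
    · rw [dif_neg h]
      obtain ⟨u, hu⟩ := Sum.isRight_iff.mp (Sum.not_isLeft.mp h)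
      simp only [Sum.elim_inr, Bfull, Fin.append_left, Function.comp_apply, dIdx,
        Equiv.symm_apply_apply]
      rw [getRight_eq hu, hu, Sum.elim_inr]
  | inr j =>
    show Sum.elim (x₂ ∘ fLive f) (Bfull f x₁ b) (gT f n (.inr j)) = b j
    rw [gT, Sum.elim_inr, Sum.elim_inr, Bfull, Fin.append_right]

end Transform

section Scheme

open scoped Classical

variable {L : FirstOrder.Language.{v, w}} {M : Type u} [L.Structure M] {ι₁ ι₂ : Type u}
variable {p₂ : GlobalType L M ι₂} {C : Set M} {a₁ : ι₁ → M}
variable (hdef₂ : p₂.CDefinable (C ∪ Set.range a₁))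
variable {m n : ℕ} (f : Fin m → ι₂ ⊕ ι₁) (φ : L.Formula (Fin m ⊕ Fin n))

noncomputable def sk : ℕ := (hdef₂ (mLive f) (mDead f + n) (fLive f) (hatφ f φ)).choose

noncomputable def sc : Fin (sk hdef₂ f φ) → M :=
  (hdef₂ (mLive f) (mDead f + n) (fLive f) (hatφ f φ)).choose_spec.choose

noncomputable def sψ : L.Formula (Fin (sk hdef₂ f φ) ⊕ Fin (mDead f + n)) :=
  (hdef₂ (mLive f) (mDead f + n) (fLive f) (hatφ f φ)).choose_spec.choose_spec.choose

lemma sc_mem : ∀ i, sc hdef₂ f φ i ∈ C ∪ Set.range a₁ :=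
  (hdef₂ (mLive f) (mDead f + n) (fLive f) (hatφ f φ)).choose_spec.choose_spec.choose_spec.1

lemma sψ_spec : ∀ B' : Fin (mDead f + n) → M,
    p₂.mem (mLive f) (mDead f + n) (fLive f) (hatφ f φ) B' ↔
      (sψ hdef₂ f φ).Realize (Sum.elim (sc hdef₂ f φ) B') :=
  (hdef₂ (mLive f) (mDead f + n) (fLive f) (hatφ f φ)).choose_spec.choose_spec.choose_spec.2

/-- slot assignment for the `c`-part -/
noncomputable def vc : Fin (sk hdef₂ f φ) → ι₁ ⊕ M := fun i =>
  if h : sc hdef₂ f φ i ∈ C then .inr (sc hdef₂ f φ i)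
  else .inl ((sc_mem hdef₂ f φ i).resolve_left h).choose

lemma ev_vc_a₁ : ev a₁ (vc hdef₂ f φ) = sc hdef₂ f φ := by
  funext i
  rw [ev, vc]
  by_cases h : sc hdef₂ f φ i ∈ C
  · rw [dif_pos h]; rfl
  · rw [dif_neg h]
    exact ((sc_mem hdef₂ f φ i).resolve_left h).choose_spec

lemma vc_inr_mem : ∀ i mv, vc hdef₂ f φ i = .inr mv → mv ∈ C := by
  intro i mv h
  rw [vc] at h
  by_cases hc : sc hdef₂ f φ i ∈ C
  · rw [dif_pos hc] at h
    cases h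
    exact hc
  · rw [dif_neg hc] at h
    cases h

/-- slot assignment for the parameter part -/
noncomputable def vP {m : ℕ} (f : Fin m → ι₂ ⊕ ι₁) {n : ℕ} (b : Fin n → M) :
    Fin (mDead f + n) → ι₁ ⊕ M :=
  Fin.append (Sum.inl ∘ dIdx f) (Sum.inr ∘ b)

lemma ev_vP {m : ℕ} (f : Fin m → ι₂ ⊕ ι₁) {n : ℕ} (b : Fin n → M) (x₁ : ι₁ → M) :
    ev x₁ (vP f b) = Bfull f x₁ b := by
  show (Sum.elim x₁ id) ∘ (Fin.append (Sum.inl ∘ dIdx f) (Sum.inr ∘ b)) = _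
  rw [comp_append, Bfull]
  congr 1

lemma vP_inr_mem {m : ℕ} (f : Fin m → ι₂ ⊕ ι₁) {n : ℕ} {b : Fin n → M} {E : Set M}
    (hb : ∀ j, b j ∈ E) : ∀ t mv, vP f b t = .inr mv → mv ∈ E := by
  intro t
  refine Fin.addCases (motive := fun t => ∀ mv, vP f b t = .inr mv → mv ∈ E) ?_ ?_ t
  · intro i mv h
    rw [vP, Fin.append_left] at h
    cases h
  · intro j mv h
    rw [vP, Fin.append_right] at h
    cases h
    exact hb j

end Scheme

end S10

namespace S10

open FirstOrder.Language

def fam1 {α : Fin 1 → Sort*} (x0 : α ⟨0, Nat.succ_pos 0⟩) : ∀ j, α j := fun j =>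
  match j with
  | ⟨0, _⟩ => x0

def fam2 {α : Fin 2 → Sort*} (x0 : α ⟨0, by omega⟩) (x1 : α ⟨1, by omega⟩) : ∀ j, α j :=
  fun j => match j with
  | ⟨0, _⟩ => x0
  | ⟨1, _⟩ => x1

def fam3 {α : Fin 3 → Sort*} (x0 : α ⟨0, by omega⟩) (x1 : α ⟨1, by omega⟩)
    (x2 : α ⟨2, by omega⟩) : ∀ j, α j := fun j =>
  match j with
  | ⟨0, _⟩ => x0
  | ⟨1, _⟩ => x1
  | ⟨2, _⟩ => x2

def nfam2 (K1 K2 : ℕ) : Fin 2 → ℕ := fam2 K1 K2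

def nfam3 (K1 K2 K3 : ℕ) : Fin 3 → ℕ := fam3 K1 K2 K3

variable {L : FirstOrder.Language.{v, w}} {M : Type u} [L.Structure M] {ι : Type u}

/-- finite conjunction of formulas -/
noncomputable def conjAll {N : ℕ} {α : Type*} (F : Fin N → L.Formula α) : L.Formula α :=
  FirstOrder.Language.BoundedFormula.iInf F

lemma realize_conjAll {N : ℕ} {α : Type*} (F : Fin N → L.Formula α) (v : α → M) :
    (conjAll F).Realize v ↔ ∀ j, (F j).Realize v := by
  rw [conjAll, Formula.Realize, BoundedFormula.realize_iInf]
  simp [Formula.Realize]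

end S10

section GT2

open S10 FirstOrder.Language

variable {L : FirstOrder.Language.{v, w}} {M : Type u} [L.Structure M] {ι : Type u}
variable (p : GlobalType L M ι)

lemma GlobalType.mem_congr {m n m' n' : ℕ} {f : Fin m → ι} {f' : Fin m' → ι}
    {φ : L.Formula (Fin m ⊕ Fin n)} {φ' : L.Formula (Fin m' ⊕ Fin n')}
    {b : Fin n → M} {b' : Fin n' → M}
    (h : ∀ x : ι → M, φ.Realize (Sum.elim (x ∘ f) b) ↔ φ'.Realize (Sum.elim (x ∘ f') b')) :
    p.mem m n f φ b ↔ p.mem m' n' f' φ' b' := by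
  constructor
  · intro hm
    exact p.mem_closure (N := 1) (m := fun _ => m) (n := fun _ => n) (f := fun _ => f)
      (φ := fun _ => φ) (b := fun _ => b) (fun _ => hm)
      (fun x hx => (h x).mp (hx ⟨0, Nat.succ_pos 0⟩))
  · intro hm
    exact p.mem_closure (N := 1) (m := fun _ => m') (n := fun _ => n') (f := fun _ => f')
      (φ := fun _ => φ') (b := fun _ => b') (fun _ => hm)
      (fun x hx => (h x).mpr (hx ⟨0, Nat.succ_pos 0⟩))

lemma GlobalType.memL_not {K : ℕ} (χ : L.Formula (Fin K)) (v : Fin K → ι ⊕ M) :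
    p.memL χ.not v ↔ ¬ p.memL χ v := by
  show p.mem _ _ _ ((χ.not).relabel (rL v)) _ ↔ ¬ p.mem _ _ _ (χ.relabel (rL v)) _
  have h : (χ.not).relabel (rL v) = (χ.relabel (rL v)).not := rfl
  rw [h, p.maximal]

lemma GlobalType.memL_closure₁ {K1 : ℕ} {χ1 : L.Formula (Fin K1)} {v1 : Fin K1 → ι ⊕ M}
    (h1 : p.memL χ1 v1)
    {K₀ : ℕ} {χ₀ : L.Formula (Fin K₀)} {v₀ : Fin K₀ → ι ⊕ M}
    (himp : ∀ x : ι → M, χ1.Realize (ev x v1) → χ₀.Realize (ev x v₀)) :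
    p.memL χ₀ v₀ :=
  p.memL_closure (N := 1) (K := fun _ => K1) (χ := fun _ => χ1) (v := fun _ => v1)
    (fun _ => h1) (fun x hx => himp x (hx ⟨0, Nat.succ_pos 0⟩))

lemma GlobalType.memL_closure₂ {K1 K2 : ℕ} {χ1 : L.Formula (Fin K1)} {v1 : Fin K1 → ι ⊕ M}
    {χ2 : L.Formula (Fin K2)} {v2 : Fin K2 → ι ⊕ M}
    (h1 : p.memL χ1 v1) (h2 : p.memL χ2 v2)
    {K₀ : ℕ} {χ₀ : L.Formula (Fin K₀)} {v₀ : Fin K₀ → ι ⊕ M}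
    (himp : ∀ x : ι → M, χ1.Realize (ev x v1) → χ2.Realize (ev x v2) →
      χ₀.Realize (ev x v₀)) :
    p.memL χ₀ v₀ := by
  refine p.memL_closure (N := 2) (K := nfam2 K1 K2)
    (χ := fam2 (α := fun j => L.Formula (Fin (nfam2 K1 K2 j))) χ1 χ2)
    (v := fam2 (α := fun j => Fin (nfam2 K1 K2 j) → ι ⊕ M) v1 v2) ?_ ?_
  · intro j
    match j with
    | ⟨0, _⟩ => exact h1
    | ⟨1, _⟩ => exact h2
  · intro x hx
    exact himp x (hx ⟨0, by omega⟩) (hx ⟨1, by omega⟩)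

lemma GlobalType.memL_finSat₃ {K1 K2 K3 : ℕ} {χ1 : L.Formula (Fin K1)} {v1 : Fin K1 → ι ⊕ M}
    {χ2 : L.Formula (Fin K2)} {v2 : Fin K2 → ι ⊕ M}
    {χ3 : L.Formula (Fin K3)} {v3 : Fin K3 → ι ⊕ M}
    (h1 : p.memL χ1 v1) (h2 : p.memL χ2 v2) (h3 : p.memL χ3 v3) :
    ∃ x : ι → M, χ1.Realize (ev x v1) ∧ χ2.Realize (ev x v2) ∧ χ3.Realize (ev x v3) := by
  have key : ∃ x : ι → M, ∀ j : Fin 3,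
      ((fam3 (α := fun j => L.Formula (Fin (nfam3 K1 K2 K3 j))) χ1 χ2 χ3) j).Realize
        (ev x ((fam3 (α := fun j => Fin (nfam3 K1 K2 K3 j) → ι ⊕ M) v1 v2 v3) j)) := by
    apply p.memL_finSat (N := 3) (K := nfam3 K1 K2 K3)
    intro j
    match j with
    | ⟨0, _⟩ => exact h1
    | ⟨1, _⟩ => exact h2
    | ⟨2, _⟩ => exact h3
  obtain ⟨x, hx⟩ := key
  exact ⟨x, hx ⟨0, by omega⟩, hx ⟨1, by omega⟩, hx ⟨2, by omega⟩⟩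

end GT2

namespace S10

section Main

open scoped Classical
open FirstOrder.Language

variable {L : FirstOrder.Language.{v, w}} {M : Type u} [L.Structure M] {ι₁ ι₂ : Type u}
variable {p₁ : GlobalType L M ι₁} {p₂ : GlobalType L M ι₂}
variable {a₁ : ι₁ → M} {a₂ : ι₂ → M} {B C : Set M}
variable (hdef₂ : p₂.CDefinable (C ∪ Set.range a₁))

/-- the slot assignment defining `q` -/
noncomputable def qv {m n : ℕ} (f : Fin m → ι₂ ⊕ ι₁) (φ : L.Formula (Fin m ⊕ Fin n))
    (b : Fin n → M) : Fin (sk hdef₂ f φ + (mDead f + n)) → ι₁ ⊕ M :=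
  Sum.elim (vc hdef₂ f φ) (vP f b) ∘ finSumFinEquiv.symm

/-- the defining formula of `q` -/
noncomputable def qχ {m n : ℕ} (f : Fin m → ι₂ ⊕ ι₁) (φ : L.Formula (Fin m ⊕ Fin n)) :
    L.Formula (Fin (sk hdef₂ f φ + (mDead f + n))) :=
  (sψ hdef₂ f φ).relabel finSumFinEquiv

/-- membership in the global type `q` witnessing left-transitivity -/
noncomputable def qmem (p₁ : GlobalType L M ι₁) {m n : ℕ} (f : Fin m → ι₂ ⊕ ι₁)
    (φ : L.Formula (Fin m ⊕ Fin n)) (b : Fin n → M) : Prop :=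
  p₁.memL (qχ hdef₂ f φ) (qv hdef₂ f φ b)

lemma realize_qχ_ev {m n : ℕ} (f : Fin m → ι₂ ⊕ ι₁) (φ : L.Formula (Fin m ⊕ Fin n))
    (b : Fin n → M) (x : ι₁ → M) :
    (qχ hdef₂ f φ).Realize (ev x (qv hdef₂ f φ b)) ↔
      (sψ hdef₂ f φ).Realize (Sum.elim (ev x (vc hdef₂ f φ)) (Bfull f x b)) := by
  rw [qχ, Formula.realize_relabel]
  refine iff_of_eq (congrArg _ (funext fun s => ?_))
  show Sum.elim x id
    ((Sum.elim (vc hdef₂ f φ) (vP f b)) (finSumFinEquiv.symm (finSumFinEquiv s))) = _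
  rw [Equiv.symm_apply_apply]
  cases s with
  | inl i => rfl
  | inr t =>
    show Sum.elim x id (vP f b t) = Bfull f x b t
    rw [← ev_vP f b x]
    rfl

lemma qv_inr_mem {m n : ℕ} {f : Fin m → ι₂ ⊕ ι₁} {φ : L.Formula (Fin m ⊕ Fin n)}
    {b : Fin n → M} {E : Set M} (hC : C ⊆ E) (hb : ∀ j, b j ∈ E) :
    ∀ t mv, qv hdef₂ f φ b t = .inr mv → mv ∈ E := by
  intro t mv h
  rw [qv] at h
  revert h
  show Sum.elim (vc hdef₂ f φ) (vP f b) (finSumFinEquiv.symm t) = .inr mv → mv ∈ E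
  rcases finSumFinEquiv.symm t with i | s
  · intro h
    exact hC (vc_inr_mem hdef₂ f φ i mv h)
  · intro h
    exact vP_inr_mem f hb s mv h

lemma q_extends (hext₁ : p₁.ExtendsTp a₁ (B ∪ C))
    (hext₂ : p₂.ExtendsTp a₂ (B ∪ (C ∪ Set.range a₁))) {m n : ℕ} (f : Fin m → ι₂ ⊕ ι₁)
    (φ : L.Formula (Fin m ⊕ Fin n)) (b : Fin n → M) (hb : ∀ i, b i ∈ B ∪ C)
    (hr : φ.Realize (Sum.elim (Sum.elim a₂ a₁ ∘ f) b)) :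
    qmem hdef₂ p₁ f φ b := by
  refine p₁.memL_of_extends hext₁
    (qv_inr_mem hdef₂ (Set.subset_union_right) hb) ?_
  rw [realize_qχ_ev, ev_vc_a₁, ← sψ_spec]
  refine hext₂ _ _ _ _ _ ?_ ?_
  · intro j
    refine Fin.addCases (motive := fun j => Bfull f a₁ b j ∈ B ∪ (C ∪ Set.range a₁)) ?_ ?_ j
    · intro i
      rw [Bfull, Fin.append_left]
      exact Or.inr (Or.inr ⟨_, rfl⟩)
    · intro jj
      rw [Bfull, Fin.append_right]
      rcases hb jj with h | h
      · exact Or.inl h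
      · exact Or.inr (Or.inl h)
  · exact (realize_hat f φ a₂ a₁ b).mpr hr

lemma hat_not {m n : ℕ} (f : Fin m → ι₂ ⊕ ι₁) (φ : L.Formula (Fin m ⊕ Fin n))
    (B' : Fin (mDead f + n) → M) :
    p₂.mem _ _ (fLive f) (hatφ f φ.not) B' ↔ ¬ p₂.mem _ _ (fLive f) (hatφ f φ) B' := by
  have h : hatφ f φ.not = (hatφ f φ).not := rfl
  rw [h, p₂.maximal]

/-- the formula expressing that the schemes for `φ.not` and `φ` are complementary -/
noncomputable def θbody {m n : ℕ} (f : Fin m → ι₂ ⊕ ι₁) (φ : L.Formula (Fin m ⊕ Fin n)) :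
    L.Formula ((Fin (sk hdef₂ f φ.not) ⊕ Fin (sk hdef₂ f φ)) ⊕ Fin (mDead f + n)) :=
  ((sψ hdef₂ f φ.not).relabel (Sum.map Sum.inl id)).iff
    ((sψ hdef₂ f φ).relabel (Sum.map Sum.inr id)).not

noncomputable def θform {m n : ℕ} (f : Fin m → ι₂ ⊕ ι₁) (φ : L.Formula (Fin m ⊕ Fin n)) :
    L.Formula (Fin (sk hdef₂ f φ.not) ⊕ Fin (sk hdef₂ f φ)) :=
  Formula.iAlls (Fin (mDead f + n)) (θbody hdef₂ f φ)

noncomputable def θF {m n : ℕ} (f : Fin m → ι₂ ⊕ ι₁) (φ : L.Formula (Fin m ⊕ Fin n)) :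
    L.Formula (Fin (sk hdef₂ f φ.not + sk hdef₂ f φ)) :=
  (θform hdef₂ f φ).relabel finSumFinEquiv

noncomputable def vθ {m n : ℕ} (f : Fin m → ι₂ ⊕ ι₁) (φ : L.Formula (Fin m ⊕ Fin n)) :
    Fin (sk hdef₂ f φ.not + sk hdef₂ f φ) → ι₁ ⊕ M :=
  Sum.elim (vc hdef₂ f φ.not) (vc hdef₂ f φ) ∘ finSumFinEquiv.symm

lemma realize_θbody {m n : ℕ} (f : Fin m → ι₂ ⊕ ι₁) (φ : L.Formula (Fin m ⊕ Fin n))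
    (w' : Fin (sk hdef₂ f φ.not) → M) (w : Fin (sk hdef₂ f φ) → M)
    (z : Fin (mDead f + n) → M) :
    (θbody hdef₂ f φ).Realize (fun a => Sum.elim (Sum.elim w' w) z (id a)) ↔
      ((sψ hdef₂ f φ.not).Realize (Sum.elim w' z) ↔
        ¬ (sψ hdef₂ f φ).Realize (Sum.elim w z)) := by
  rw [θbody, Formula.realize_iff, Formula.realize_not, Formula.realize_relabel,
    Formula.realize_relabel]
  have e1 : (fun a => Sum.elim (Sum.elim w' w) z (id a)) ∘ (Sum.map Sum.inl id) =
      Sum.elim w' z := funext fun s => by cases s <;> rfl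
  have e2 : (fun a => Sum.elim (Sum.elim w' w) z (id a)) ∘ (Sum.map Sum.inr id) =
      Sum.elim w z := funext fun s => by cases s <;> rfl
  rw [e1, e2]

lemma realize_θform {m n : ℕ} (f : Fin m → ι₂ ⊕ ι₁) (φ : L.Formula (Fin m ⊕ Fin n))
    (w' : Fin (sk hdef₂ f φ.not) → M) (w : Fin (sk hdef₂ f φ) → M) :
    (θform hdef₂ f φ).Realize (Sum.elim w' w) ↔
      ∀ z : Fin (mDead f + n) → M,
        ((sψ hdef₂ f φ.not).Realize (Sum.elim w' z) ↔
          ¬ (sψ hdef₂ f φ).Realize (Sum.elim w z)) := by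
  rw [θform, Formula.realize_iAlls]
  exact forall_congr' fun z => realize_θbody hdef₂ f φ w' w z

lemma θ_mem (hext₁ : p₁.ExtendsTp a₁ (B ∪ C)) {m n : ℕ} (f : Fin m → ι₂ ⊕ ι₁)
    (φ : L.Formula (Fin m ⊕ Fin n)) :
    p₁.memL (θF hdef₂ f φ) (vθ hdef₂ f φ) := by
  refine p₁.memL_of_extends hext₁ ?_ ?_
  · intro t mv h
    rw [vθ] at h
    revert h
    show Sum.elim (vc hdef₂ f φ.not) (vc hdef₂ f φ) (finSumFinEquiv.symm t) = .inr mv →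
      mv ∈ B ∪ C
    rcases finSumFinEquiv.symm t with i | i <;> intro h
    · exact Or.inr (vc_inr_mem hdef₂ f φ.not i mv h)
    · exact Or.inr (vc_inr_mem hdef₂ f φ i mv h)
  · rw [θF, Formula.realize_relabel]
    have e1 : ev a₁ (vθ hdef₂ f φ) ∘ finSumFinEquiv =
        Sum.elim (sc hdef₂ f φ.not) (sc hdef₂ f φ) := by
      funext s
      show Sum.elim a₁ id ((Sum.elim (vc hdef₂ f φ.not) (vc hdef₂ f φ))
        (finSumFinEquiv.symm (finSumFinEquiv s))) = _
      rw [Equiv.symm_apply_apply]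
      cases s with
      | inl i =>
        show ev a₁ (vc hdef₂ f φ.not) i = _
        rw [ev_vc_a₁]
        rfl
      | inr i =>
        show ev a₁ (vc hdef₂ f φ) i = _
        rw [ev_vc_a₁]
        rfl
    rw [e1, realize_θform]
    intro z
    rw [← sψ_spec, ← sψ_spec, hat_not]

lemma ev_vθ {m n : ℕ} (f : Fin m → ι₂ ⊕ ι₁) (φ : L.Formula (Fin m ⊕ Fin n)) (x : ι₁ → M) :
    ev x (vθ hdef₂ f φ) ∘ finSumFinEquiv =
      Sum.elim (ev x (vc hdef₂ f φ.not)) (ev x (vc hdef₂ f φ)) := by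
  funext s
  show Sum.elim x id ((Sum.elim (vc hdef₂ f φ.not) (vc hdef₂ f φ))
    (finSumFinEquiv.symm (finSumFinEquiv s))) = _
  rw [Equiv.symm_apply_apply]
  cases s <;> rfl

lemma q_maximal (hext₁ : p₁.ExtendsTp a₁ (B ∪ C)) {m n : ℕ} (f : Fin m → ι₂ ⊕ ι₁)
    (φ : L.Formula (Fin m ⊕ Fin n)) (b : Fin n → M) :
    qmem hdef₂ p₁ f φ.not b ↔ ¬ qmem hdef₂ p₁ f φ b := by
  constructor
  · intro h' h
    obtain ⟨x, hθ, h1, h2⟩ := p₁.memL_finSat₃ (θ_mem hdef₂ hext₁ f φ) h h'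
    rw [θF, Formula.realize_relabel, ev_vθ, realize_θform] at hθ
    rw [realize_qχ_ev] at h1 h2
    exact ((hθ (Bfull f x b)).mp h2) h1
  · intro h'
    have hn : p₁.memL (qχ hdef₂ f φ).not (qv hdef₂ f φ b) := (p₁.memL_not _ _).mpr h'
    refine p₁.memL_closure₂ hn (θ_mem hdef₂ hext₁ f φ) ?_
    intro x hxn hθ
    rw [Formula.realize_not, realize_qχ_ev] at hxn
    rw [θF, Formula.realize_relabel, ev_vθ, realize_θform] at hθ
    rw [realize_qχ_ev]
    exact (hθ (Bfull f x b)).mpr hxn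

end Main

end S10

namespace S10

section FinSatSec

open scoped Classical
open FirstOrder.Language

variable {L : FirstOrder.Language.{v, w}} {M : Type u} [L.Structure M] {ι₁ ι₂ : Type u}
variable {p₁ : GlobalType L M ι₁} {p₂ : GlobalType L M ι₂}
variable {a₁ : ι₁ → M} {a₂ : ι₂ → M} {B C : Set M}
variable (hdef₂ : p₂.CDefinable (C ∪ Set.range a₁))
variable {N : ℕ} {m n : Fin N → ℕ} (f : ∀ j, Fin (m j) → ι₂ ⊕ ι₁)
variable (φ : ∀ j, L.Formula (Fin (m j) ⊕ Fin (n j))) (b : ∀ j, Fin (n j) → M)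

/-- all slots of all the formulas in the family -/
abbrev σS : Type := (j : Fin N) × Fin (sk hdef₂ (f j) (φ j) + (mDead (f j) + n j))

noncomputable def VV (j : Fin N) :
    Fin (sk hdef₂ (f j) (φ j) + (mDead (f j) + n j)) → ι₁ ⊕ M :=
  qv hdef₂ (f j) (φ j) (b j)

/-- slots that stay free in `Θ`: variable slots and parameters lying in `C` -/
def FreeP (C : Set M) (s : σS hdef₂ f φ) : Prop :=
  Sum.elim (fun _ => True) (· ∈ C) (VV hdef₂ f φ b s.1 s.2)

noncomputable def inj (j : Fin N) (t : Fin (sk hdef₂ (f j) (φ j) + (mDead (f j) + n j))) :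
    {s : σS hdef₂ f φ // FreeP hdef₂ f φ b C s} ⊕ {s : σS hdef₂ f φ // ¬ FreeP hdef₂ f φ b C s} :=
  if h : FreeP hdef₂ f φ b C ⟨j, t⟩ then .inl ⟨⟨j, t⟩, h⟩ else .inr ⟨⟨j, t⟩, h⟩

/-- the (finite) set of `ι₂`-indices used by the family -/
def lSet : Set ι₂ :=
  Set.range (fun pr : (j : Fin N) × {i : Fin (m j) // (f j i).isLeft} =>
    (f pr.1 pr.2.1).getLeft pr.2.2)

noncomputable def BigΨ : L.Formula
    ({s : σS hdef₂ f φ // FreeP hdef₂ f φ b C s} ⊕ {s : σS hdef₂ f φ // ¬ FreeP hdef₂ f φ b C s}) :=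
  conjAll (fun j => (qχ hdef₂ (f j) (φ j)).relabel (inj hdef₂ f φ b (C := C) j))

noncomputable def hmapJ (j : Fin N) : Fin (m j) ⊕ Fin (n j) →
    (({s : σS hdef₂ f φ // FreeP hdef₂ f φ b C s} ⊕
      {s : σS hdef₂ f φ // ¬ FreeP hdef₂ f φ b C s}) ⊕ ↥(lSet f)) :=
  Sum.elim
    (fun i => if h : (f j i).isLeft then .inr ⟨(f j i).getLeft h, ⟨⟨j, ⟨i, h⟩⟩, rfl⟩⟩
      else .inl (inj hdef₂ f φ b (C := C) j
        (finSumFinEquiv (.inr (Fin.castAdd (n j) (eDead (f j) ⟨i, Sum.not_isLeft.mp h⟩))))))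
    (fun jj => .inl (inj hdef₂ f φ b (C := C) j
      (finSumFinEquiv (.inr (Fin.natAdd (mDead (f j)) jj)))))

noncomputable def BigΦ : L.Formula
    (({s : σS hdef₂ f φ // FreeP hdef₂ f φ b C s} ⊕
      {s : σS hdef₂ f φ // ¬ FreeP hdef₂ f φ b C s}) ⊕ ↥(lSet f)) :=
  conjAll (fun j => (φ j).relabel (hmapJ hdef₂ f φ b (C := C) j))

noncomputable def Θ : L.Formula {s : σS hdef₂ f φ // FreeP hdef₂ f φ b C s} :=
  letI : Finite ↥(lSet f) := (Set.finite_range _).to_subtype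
  Formula.iAlls {s : σS hdef₂ f φ // ¬ FreeP hdef₂ f φ b C s} ((BigΨ hdef₂ f φ b (C := C)).imp
    (Formula.iExs ↥(lSet f) (BigΦ hdef₂ f φ b (C := C))))

noncomputable def eΓ : {s : σS hdef₂ f φ // FreeP hdef₂ f φ b C s} ≃
    Fin (Fintype.card {s : σS hdef₂ f φ // FreeP hdef₂ f φ b C s}) := Fintype.equivFin _

noncomputable def ΘF : L.Formula
    (Fin (Fintype.card {s : σS hdef₂ f φ // FreeP hdef₂ f φ b C s})) :=
  (Θ hdef₂ f φ b (C := C)).relabel (eΓ hdef₂ f φ b (C := C))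

noncomputable def vΘ :
    Fin (Fintype.card {s : σS hdef₂ f φ // FreeP hdef₂ f φ b C s}) → ι₁ ⊕ M :=
  (fun s : {s : σS hdef₂ f φ // FreeP hdef₂ f φ b C s} => VV hdef₂ f φ b s.1.1 s.1.2) ∘
    (eΓ hdef₂ f φ b (C := C)).symm

lemma realize_ΘF (x : ι₁ → M) :
    (ΘF hdef₂ f φ b (C := C)).Realize (ev x (vΘ hdef₂ f φ b (C := C))) ↔
      (Θ hdef₂ f φ b (C := C)).Realize
        (fun s : {s : σS hdef₂ f φ // FreeP hdef₂ f φ b C s} =>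
          Sum.elim x id (VV hdef₂ f φ b s.1.1 s.1.2)) := by
  rw [ΘF, Formula.realize_relabel]
  refine iff_of_eq (congrArg _ (funext fun s => ?_))
  show Sum.elim x id (VV hdef₂ f φ b ((eΓ hdef₂ f φ b (C := C)).symm
    ((eΓ hdef₂ f φ b (C := C)) s)).1.1 _) = _
  rw [Equiv.symm_apply_apply]

end FinSatSec

end S10

namespace S10

section SlotLemmas

open FirstOrder.Language

variable {L : FirstOrder.Language.{v, w}} {M : Type u} [L.Structure M] {ι₁ ι₂ : Type u}

lemma dIdx_eDead {m : ℕ} (f : Fin m → ι₂ ⊕ ι₁) (i : Fin m) (h : (f i).isRight) :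
    dIdx f (eDead f ⟨i, h⟩) = (f i).getRight h := by
  rw [dIdx]
  congr 1 <;> rw [Equiv.symm_apply_apply]

lemma vP_castAdd {m : ℕ} (f : Fin m → ι₂ ⊕ ι₁) {n : ℕ} (b : Fin n → M) (dj : Fin (mDead f)) :
    vP f b (Fin.castAdd n dj) = .inl (dIdx f dj) := by
  rw [vP, Fin.append_left]
  rfl

lemma vP_natAdd {m : ℕ} (f : Fin m → ι₂ ⊕ ι₁) {n : ℕ} (b : Fin n → M) (jj : Fin n) :
    vP f b (Fin.natAdd (mDead f) jj) = .inr (b jj) := by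
  rw [vP, Fin.append_right]
  rfl

lemma Bfull_castAdd {m : ℕ} (f : Fin m → ι₂ ⊕ ι₁) {n : ℕ} (x : ι₁ → M) (b : Fin n → M)
    (dj : Fin (mDead f)) : Bfull f x b (Fin.castAdd n dj) = x (dIdx f dj) := by
  rw [Bfull, Fin.append_left]
  rfl

lemma Bfull_natAdd {m : ℕ} (f : Fin m → ι₂ ⊕ ι₁) {n : ℕ} (x : ι₁ → M) (b : Fin n → M)
    (jj : Fin n) : Bfull f x b (Fin.natAdd (mDead f) jj) = b jj := by
  rw [Bfull, Fin.append_right]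

end SlotLemmas

section FinSatSec2

open scoped Classical
open FirstOrder.Language

variable {L : FirstOrder.Language.{v, w}} {M : Type u} [L.Structure M] {ι₁ ι₂ : Type u}
variable {p₁ : GlobalType L M ι₁} {p₂ : GlobalType L M ι₂}
variable {a₁ : ι₁ → M} {a₂ : ι₂ → M} {B C : Set M}
variable (hdef₂ : p₂.CDefinable (C ∪ Set.range a₁))
variable {N : ℕ} {m n : Fin N → ℕ} (f : ∀ j, Fin (m j) → ι₂ ⊕ ι₁)
variable (φ : ∀ j, L.Formula (Fin (m j) ⊕ Fin (n j))) (b : ∀ j, Fin (n j) → M)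

lemma VV_c (j : Fin N) (i : Fin (sk hdef₂ (f j) (φ j))) :
    VV hdef₂ f φ b j (finSumFinEquiv (.inl i)) = vc hdef₂ (f j) (φ j) i := by
  rw [VV, qv]
  show Sum.elim _ _ (finSumFinEquiv.symm (finSumFinEquiv (Sum.inl i))) = _
  rw [Equiv.symm_apply_apply]
  rfl

lemma VV_p (j : Fin N) (s : Fin (mDead (f j) + n j)) :
    VV hdef₂ f φ b j (finSumFinEquiv (.inr s)) = vP (f j) (b j) s := by
  rw [VV, qv]
  show Sum.elim _ _ (finSumFinEquiv.symm (finSumFinEquiv (Sum.inr s))) = _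
  rw [Equiv.symm_apply_apply]
  rfl

lemma Free_c (j : Fin N) (i : Fin (sk hdef₂ (f j) (φ j))) :
    FreeP hdef₂ f φ b C ⟨j, finSumFinEquiv (.inl i)⟩ := by
  rw [FreeP, VV_c, vc]
  by_cases h : sc hdef₂ (f j) (φ j) i ∈ C
  · rw [dif_pos h]
    exact h
  · rw [dif_neg h]
    trivial

lemma Free_dd (j : Fin N) (dj : Fin (mDead (f j))) :
    FreeP hdef₂ f φ b C ⟨j, finSumFinEquiv (.inr (Fin.castAdd (n j) dj))⟩ := by
  rw [FreeP, VV_p, vP_castAdd]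
  trivial

lemma elimval_c (j : Fin N) (x : ι₁ → M) :
    ∀ i, Sum.elim x id (VV hdef₂ f φ b j (finSumFinEquiv (.inl i))) =
      ev x (vc hdef₂ (f j) (φ j)) i := by
  intro i
  rw [VV_c]
  rfl

/-- the key truth lemma: `a₁` satisfies the consistency formula `Θ` -/
lemma Θ_true :
    (Θ hdef₂ f φ b (C := C)).Realize
      (fun s : {s : σS hdef₂ f φ // FreeP hdef₂ f φ b C s} =>
        Sum.elim a₁ id (VV hdef₂ f φ b s.1.1 s.1.2)) := by
  letI : Finite ↥(lSet f) := (Set.finite_range _).to_subtype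
  rw [Θ, Formula.realize_iAlls]
  intro zz
  rw [Formula.realize_imp]
  intro hyp
  -- the combined valuation
  set W : σS hdef₂ f φ → M := fun s =>
    Sum.elim (fun s' : {s : σS hdef₂ f φ // FreeP hdef₂ f φ b C s} =>
        Sum.elim a₁ id (VV hdef₂ f φ b s'.1.1 s'.1.2)) zz
      (inj hdef₂ f φ b (C := C) s.1 s.2) with hW
  have hWfree : ∀ (s : σS hdef₂ f φ) (h : FreeP hdef₂ f φ b C s),
      W s = Sum.elim a₁ id (VV hdef₂ f φ b s.1 s.2) := by
    intro s h
    rw [hW]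
    show Sum.elim _ _ (inj hdef₂ f φ b (C := C) s.1 s.2) = _
    rw [inj]
    rcases s with ⟨j, t⟩
    rw [dif_pos h]
    rfl
  set bb : ∀ j : Fin N, Fin (n j) → M := fun j jj =>
    W ⟨j, finSumFinEquiv (.inr (Fin.natAdd (mDead (f j)) jj))⟩ with hbb
  -- each transformed formula is in p₂
  have hψ : ∀ j, (sψ hdef₂ (f j) (φ j)).Realize
      (Sum.elim (sc hdef₂ (f j) (φ j)) (Bfull (f j) a₁ (bb j))) := by
    intro j
    rw [BigΨ, realize_conjAll] at hyp
    have h1 := hyp j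
    rw [Formula.realize_relabel, qχ, Formula.realize_relabel] at h1
    refine (iff_of_eq (congrArg _ (funext fun s => ?_))).mp h1
    show W ⟨j, finSumFinEquiv s⟩ = _
    cases s with
    | inl i =>
      rw [hWfree _ (Free_c hdef₂ f φ b j i), VV_c]
      show ev a₁ (vc hdef₂ (f j) (φ j)) i = _
      rw [ev_vc_a₁]
      rfl
    | inr s =>
      refine Fin.addCases (motive := fun s => W ⟨j, finSumFinEquiv (.inr s)⟩ =
        Sum.elim (sc hdef₂ (f j) (φ j)) (Bfull (f j) a₁ (bb j)) (.inr s)) ?_ ?_ s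
      · intro dj
        rw [hWfree _ (Free_dd hdef₂ f φ b j dj), VV_p, vP_castAdd]
        show a₁ (dIdx (f j) dj) = _
        rw [Sum.elim_inr, Bfull_castAdd]
      · intro jj
        show bb j jj = _
        rw [Sum.elim_inr, Bfull_natAdd]
  have hmem2 : ∀ j, p₂.mem _ _ (fLive (f j)) (hatφ (f j) (φ j)) (Bfull (f j) a₁ (bb j)) :=
    fun j => (sψ_spec hdef₂ (f j) (φ j) _).mpr (hψ j)
  obtain ⟨y, hy⟩ := p₂.finSat N _ _ _ _ _ hmem2
  apply Formula.realize_iExs.mpr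
  refine ⟨fun s => y s.1, ?_⟩
  rw [BigΦ, realize_conjAll]
  intro j
  rw [Formula.realize_relabel]
  have hyj := (realize_hat (f j) (φ j) y a₁ (bb j)).mp (hy j)
  refine (iff_of_eq (congrArg _ (funext fun s => ?_))).mpr hyj
  cases s with
  | inl i =>
    show Sum.elim _ _ (hmapJ hdef₂ f φ b (C := C) j (.inl i)) = Sum.elim y a₁ (f j i)
    rw [hmapJ, Sum.elim_inl]
    by_cases h : (f j i).isLeft
    · rw [dif_pos h]
      obtain ⟨u, hu⟩ := Sum.isLeft_iff.mp h
      show y ((f j i).getLeft h) = _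
      rw [getLeft_eq hu, hu, Sum.elim_inl]
    · rw [dif_neg h]
      obtain ⟨u, hu⟩ := Sum.isRight_iff.mp (Sum.not_isLeft.mp h)
      show W ⟨j, finSumFinEquiv (.inr (Fin.castAdd (n j)
        (eDead (f j) ⟨i, Sum.not_isLeft.mp h⟩)))⟩ = _
      rw [hWfree _ (Free_dd hdef₂ f φ b j _), VV_p, vP_castAdd]
      show a₁ (dIdx (f j) (eDead (f j) ⟨i, Sum.not_isLeft.mp h⟩)) = _
      rw [dIdx_eDead, getRight_eq hu, hu, Sum.elim_inr]
  | inr jj =>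
    show W ⟨j, finSumFinEquiv (.inr (Fin.natAdd (mDead (f j)) jj))⟩ = bb j jj
    rfl

/-- using `Θ` at a realization `x` of the `p₁`-side -/
lemma Θ_use (a₂ : ι₂ → M) (x : ι₁ → M)
    (hΘ : (Θ hdef₂ f φ b (C := C)).Realize
      (fun s : {s : σS hdef₂ f φ // FreeP hdef₂ f φ b C s} =>
        Sum.elim x id (VV hdef₂ f φ b s.1.1 s.1.2)))
    (hχ : ∀ j, (qχ hdef₂ (f j) (φ j)).Realize (ev x (VV hdef₂ f φ b j))) :
    ∃ a : ι₂ ⊕ ι₁ → M, ∀ j, (φ j).Realize (Sum.elim (a ∘ f j) (b j)) := by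
  letI : Finite ↥(lSet f) := (Set.finite_range _).to_subtype
  rw [Θ, Formula.realize_iAlls] at hΘ
  have h1 := hΘ (fun s : {s : σS hdef₂ f φ // ¬ FreeP hdef₂ f φ b C s} =>
    Sum.elim x id (VV hdef₂ f φ b s.1.1 s.1.2))
  rw [Formula.realize_imp] at h1
  have elim_inj : ∀ (j : Fin N) t,
      Sum.elim (fun s' : {s : σS hdef₂ f φ // FreeP hdef₂ f φ b C s} =>
          Sum.elim x id (VV hdef₂ f φ b s'.1.1 s'.1.2))
        (fun s' : {s : σS hdef₂ f φ // ¬ FreeP hdef₂ f φ b C s} =>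
          Sum.elim x id (VV hdef₂ f φ b s'.1.1 s'.1.2))
        (inj hdef₂ f φ b (C := C) j t) = Sum.elim x id (VV hdef₂ f φ b j t) := by
    intro j t
    rw [inj]
    by_cases h : FreeP hdef₂ f φ b C ⟨j, t⟩
    · rw [dif_pos h]
      rfl
    · rw [dif_neg h]
      rfl
  have hBig : (BigΨ hdef₂ f φ b (C := C)).Realize
      (fun a => Sum.elim (fun s' : {s : σS hdef₂ f φ // FreeP hdef₂ f φ b C s} =>
          Sum.elim x id (VV hdef₂ f φ b s'.1.1 s'.1.2))
        (fun s' : {s : σS hdef₂ f φ // ¬ FreeP hdef₂ f φ b C s} =>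
          Sum.elim x id (VV hdef₂ f φ b s'.1.1 s'.1.2)) (id a)) := by
    rw [BigΨ, realize_conjAll]
    intro j
    rw [Formula.realize_relabel]
    refine (iff_of_eq (congrArg _ (funext fun t => ?_))).mpr (hχ j)
    exact elim_inj j t
  obtain ⟨ee, hee⟩ := Formula.realize_iExs.mp (h1 hBig)
  refine ⟨Sum.elim (fun s => if h : s ∈ lSet f then ee ⟨s, h⟩ else a₂ s) x, ?_⟩
  intro j
  rw [BigΦ, realize_conjAll] at hee
  have hj := hee j
  rw [Formula.realize_relabel] at hj
  refine (iff_of_eq (congrArg _ (funext fun s => ?_))).mp hj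
  cases s with
  | inl i =>
    simp only [Function.comp_apply, id_eq, Sum.elim_inl]
    rw [hmapJ, Sum.elim_inl]
    by_cases h : (f j i).isLeft
    · rw [dif_pos h, Sum.elim_inr]
      obtain ⟨u, hu⟩ := Sum.isLeft_iff.mp h
      have hmem : u ∈ lSet f := by
        rw [← getLeft_eq hu h]
        exact ⟨⟨j, ⟨i, h⟩⟩, rfl⟩
      have hr : Sum.elim (fun s => if h : s ∈ lSet f then ee ⟨s, h⟩ else a₂ s) x (f j i) =
          ee ⟨u, hmem⟩ := by
        rw [hu, Sum.elim_inl, dif_pos hmem]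
      rw [hr]
      congr 1
      exact Subtype.ext (getLeft_eq hu h)
    · rw [dif_neg h, Sum.elim_inl, elim_inj, VV_p, vP_castAdd, Sum.elim_inl, dIdx_eDead]
      obtain ⟨u, hu⟩ := Sum.isRight_iff.mp (Sum.not_isLeft.mp h)
      rw [getRight_eq hu, hu, Sum.elim_inr]
  | inr jj =>
    simp only [Function.comp_apply, id_eq, Sum.elim_inr]
    rw [hmapJ, Sum.elim_inr, Sum.elim_inl, elim_inj, VV_p, vP_natAdd, Sum.elim_inr]
    rfl

end FinSatSec2

end S10

namespace S10

section FinSatFinal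

open scoped Classical
open FirstOrder.Language

variable {L : FirstOrder.Language.{v, w}} {M : Type u} [L.Structure M] {ι₁ ι₂ : Type u}
variable {p₁ : GlobalType L M ι₁} {p₂ : GlobalType L M ι₂}
variable {a₁ : ι₁ → M} {a₂ : ι₂ → M} {B C : Set M}
variable (hdef₂ : p₂.CDefinable (C ∪ Set.range a₁))

def cX {K0 : ℕ} {N : ℕ} {Kf : Fin N → ℕ} (x0 : L.Formula (Fin K0))
    (x : ∀ j, L.Formula (Fin (Kf j))) : ∀ j, L.Formula (Fin (cN K0 Kf j)) :=
  famCons (α := fun j => L.Formula (Fin (cN K0 Kf j))) x0 x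

def cV {ι : Type u} {K0 : ℕ} {N : ℕ} {Kf : Fin N → ℕ} (v0 : Fin K0 → ι ⊕ M)
    (vv : ∀ j, Fin (Kf j) → ι ⊕ M) : ∀ j, Fin (cN K0 Kf j) → ι ⊕ M :=
  famCons (α := fun j => Fin (cN K0 Kf j) → ι ⊕ M) v0 vv

lemma q_finSat (hext₁ : p₁.ExtendsTp a₁ (B ∪ C)) (a₂ : ι₂ → M) (N : ℕ) (m n : Fin N → ℕ)
    (f : ∀ j, Fin (m j) → ι₂ ⊕ ι₁) (φ : ∀ j, L.Formula (Fin (m j) ⊕ Fin (n j)))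
    (b : ∀ j, Fin (n j) → M) (h : ∀ j, qmem hdef₂ p₁ (f j) (φ j) (b j)) :
    ∃ a : ι₂ ⊕ ι₁ → M, ∀ j, (φ j).Realize (Sum.elim (a ∘ f j) (b j)) := by
  have hΘmem : p₁.memL (ΘF hdef₂ f φ b (C := C)) (vΘ hdef₂ f φ b (C := C)) := by
    refine p₁.memL_of_extends hext₁ ?_ ?_
    · intro t mv hmv
      have hmv' : VV hdef₂ f φ b ((eΓ hdef₂ f φ b (C := C)).symm t).1.1
          ((eΓ hdef₂ f φ b (C := C)).symm t).1.2 = .inr mv := hmv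
      have hF : Sum.elim (fun _ => True) (· ∈ C)
          (VV hdef₂ f φ b ((eΓ hdef₂ f φ b (C := C)).symm t).1.1
            ((eΓ hdef₂ f φ b (C := C)).symm t).1.2) :=
        ((eΓ hdef₂ f φ b (C := C)).symm t).2
      rw [hmv'] at hF
      exact Or.inr hF
    · exact (realize_ΘF hdef₂ f φ b a₁).mpr (Θ_true hdef₂ f φ b)
  have key : ∃ x : ι₁ → M, ∀ j : Fin (N + 1),
      ((cX (ΘF hdef₂ f φ b (C := C)) (fun j => qχ hdef₂ (f j) (φ j))) j).Realize
        (ev x ((cV (vΘ hdef₂ f φ b (C := C))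
          (fun j => qv hdef₂ (f j) (φ j) (b j))) j)) := by
    apply p₁.memL_finSat (N := N + 1) (K := cN _ _)
    intro j
    match j with
    | ⟨0, _⟩ => exact hΘmem
    | ⟨i + 1, hi⟩ => exact h ⟨i, Nat.lt_of_succ_lt_succ hi⟩
  obtain ⟨x, hx⟩ := key
  have hx0 : (ΘF hdef₂ f φ b (C := C)).Realize (ev x (vΘ hdef₂ f φ b (C := C))) :=
    hx ⟨0, Nat.succ_pos N⟩
  have hxj : ∀ j : Fin N, (qχ hdef₂ (f j) (φ j)).Realize
      (ev x (qv hdef₂ (f j) (φ j) (b j))) := fun j => hx j.succ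
  exact Θ_use hdef₂ f φ b a₂ x ((realize_ΘF hdef₂ f φ b x).mp hx0) hxj

end FinSatFinal

section Defin

open scoped Classical
open FirstOrder.Language

variable {L : FirstOrder.Language.{v, w}} {M : Type u} [L.Structure M] {ι₁ ι₂ : Type u}
variable {p₁ : GlobalType L M ι₁} {p₂ : GlobalType L M ι₂}
variable {a₁ : ι₁ → M} {a₂ : ι₂ → M} {B C : Set M}
variable (hdef₂ : p₂.CDefinable (C ∪ Set.range a₁))

lemma sumFinCases {k d nn : ℕ} (s : Fin k ⊕ Fin (d + nn)) :
    (∃ i, s = .inl i) ∨ (∃ dj : Fin d, s = .inr (Fin.castAdd nn dj)) ∨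
      (∃ jj : Fin nn, s = .inr (Fin.natAdd d jj)) := by
  cases s with
  | inl i => exact Or.inl ⟨i, rfl⟩
  | inr t =>
    refine Or.inr ?_
    refine Fin.addCases (motive := fun t =>
      (∃ dj, (Sum.inr t : Fin k ⊕ Fin (d + nn)) = .inr (Fin.castAdd nn dj)) ∨
      (∃ jj, (Sum.inr t : Fin k ⊕ Fin (d + nn)) = .inr (Fin.natAdd d jj))) ?_ ?_ t
    · exact fun dj => Or.inl ⟨dj, rfl⟩
    · exact fun jj => Or.inr ⟨jj, rfl⟩

variable {m n : ℕ} (f : Fin m → ι₂ ⊕ ι₁) (φ : L.Formula (Fin m ⊕ Fin n))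

lemma qv_at_c {b : Fin n → M} {t : Fin (sk hdef₂ f φ + (mDead f + n))}
    {i : Fin (sk hdef₂ f φ)} (h : finSumFinEquiv.symm t = .inl i) :
    qv hdef₂ f φ b t = vc hdef₂ f φ i := by
  show Sum.elim (vc hdef₂ f φ) (vP f b) (finSumFinEquiv.symm t) = _
  rw [h, Sum.elim_inl]

lemma qv_at_dead {b : Fin n → M} {t : Fin (sk hdef₂ f φ + (mDead f + n))}
    {dj : Fin (mDead f)} (h : finSumFinEquiv.symm t = .inr (Fin.castAdd n dj)) :
    qv hdef₂ f φ b t = .inl (dIdx f dj) := by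
  show Sum.elim (vc hdef₂ f φ) (vP f b) (finSumFinEquiv.symm t) = _
  rw [h, Sum.elim_inr, vP_castAdd]

lemma qv_at_b {b : Fin n → M} {t : Fin (sk hdef₂ f φ + (mDead f + n))}
    {jj : Fin n} (h : finSumFinEquiv.symm t = .inr (Fin.natAdd (mDead f) jj)) :
    qv hdef₂ f φ b t = .inr (b jj) := by
  show Sum.elim (vc hdef₂ f φ) (vP f b) (finSumFinEquiv.symm t) = _
  rw [h, Sum.elim_inr, vP_natAdd]

lemma qv_left_invariant (b b' : Fin n → M) (t : Fin (sk hdef₂ f φ + (mDead f + n)))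
    (h : (qv hdef₂ f φ b' t).isLeft) : qv hdef₂ f φ b t = qv hdef₂ f φ b' t := by
  rcases sumFinCases (finSumFinEquiv.symm t) with ⟨i, hi⟩ | ⟨dj, hdj⟩ | ⟨jj, hjj⟩
  · rw [qv_at_c hdef₂ f φ hi, qv_at_c hdef₂ f φ hi]
  · rw [qv_at_dead hdef₂ f φ hdj, qv_at_dead hdef₂ f φ hdj]
  · rw [qv_at_b hdef₂ f φ hjj] at h ⊢
    cases h

lemma q_definable (hdef₁ : p₁.CDefinable C) :
    ∃ (k : ℕ) (c : Fin k → M) (ψ : L.Formula (Fin k ⊕ Fin n)),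
      (∀ i, c i ∈ C) ∧
      ∀ b : Fin n → M, (qmem hdef₂ p₁ f φ b ↔ ψ.Realize (Sum.elim c b)) := by
  rcases isEmpty_or_nonempty (Fin n → M) with hE | hNE
  · exact ⟨0, Fin.elim0, ⊥, fun i => i.elim0, fun b => (hE.false b).elim⟩
  obtain ⟨b₀⟩ := hNE
  set v₀ := qv hdef₂ f φ b₀ with hv₀
  -- pattern invariance
  have hpat : ∀ (b : Fin n → M) t, (qv hdef₂ f φ b t).isLeft = (v₀ t).isLeft := by
    intro b t
    rcases sumFinCases (finSumFinEquiv.symm t) with ⟨i, hi⟩ | ⟨dj, hdj⟩ | ⟨jj, hjj⟩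
    · rw [qv_at_c hdef₂ f φ hi, hv₀, qv_at_c hdef₂ f φ hi]
    · rw [qv_at_dead hdef₂ f φ hdj, hv₀, qv_at_dead hdef₂ f φ hdj]
    · rw [qv_at_b hdef₂ f φ hjj, hv₀, qv_at_b hdef₂ f φ hjj]
      rfl
  have hpat' : ∀ (b : Fin n → M) t, (v₀ t).isRight → (qv hdef₂ f φ b t).isRight := by
    intro b t h
    rw [Sum.isRight_iff] at h ⊢
    obtain ⟨mv, hmv⟩ := h
    have h2 : ¬ (qv hdef₂ f φ b t).isLeft = true := by
      rw [hpat b t, hmv]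
      simp
    obtain ⟨u, hu⟩ := Sum.isRight_iff.mp (Sum.not_isLeft.mp h2)
    exact ⟨u, hu⟩
  -- the parameter tuple of `qv b` read off along the slots of `v₀`
  set bW : (Fin n → M) → Fin (nPar v₀) → M := fun b j =>
    (qv hdef₂ f φ b ((ePar v₀).symm j).1).getRight
      (hpat' b ((ePar v₀).symm j).1 ((ePar v₀).symm j).2) with hbW
  -- `qmem b` is `p₁`-membership with fixed syntactic data and parameters `bW b`
  have claim1 : ∀ b : Fin n → M, qmem hdef₂ p₁ f φ b ↔
      p₁.mem (nVar v₀) (nPar v₀) (fL v₀) ((qχ hdef₂ f φ).relabel (rL v₀)) (bW b) := by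
    intro b
    refine p₁.mem_congr ?_
    intro x
    rw [realize_compress, Formula.realize_relabel]
    refine iff_of_eq (congrArg _ (funext fun t => ?_))
    show ev x (qv hdef₂ f φ b) t = Sum.elim (x ∘ fL v₀) (bW b) (rL v₀ t)
    rw [rL]
    by_cases h : (v₀ t).isLeft
    · rw [dif_pos h, Sum.elim_inl]
      obtain ⟨u, hu⟩ := Sum.isLeft_iff.mp h
      have h1 : qv hdef₂ f φ b t = Sum.inl u := by
        rw [qv_left_invariant hdef₂ f φ b b₀ t (by rw [← hv₀]; exact h), ← hv₀]
        exact hu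
      have h2 : v₀ ((eVar v₀).symm (eVar v₀ ⟨t, h⟩)).1 = Sum.inl u := by
        rw [Equiv.symm_apply_apply]
        exact hu
      show Sum.elim x id (qv hdef₂ f φ b t) = x (fL v₀ (eVar v₀ ⟨t, h⟩))
      rw [h1, Sum.elim_inl, fL, getLeft_eq h2]
    · rw [dif_neg h, Sum.elim_inr]
      obtain ⟨mv, hmv⟩ := Sum.isRight_iff.mp (hpat' b t (Sum.not_isLeft.mp h))
      have h2 : qv hdef₂ f φ b ((ePar v₀).symm (ePar v₀ ⟨t, Sum.not_isLeft.mp h⟩)).1 =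
          Sum.inr mv := by
        rw [Equiv.symm_apply_apply]
        exact hmv
      show Sum.elim x id (qv hdef₂ f φ b t) = bW b (ePar v₀ ⟨t, Sum.not_isLeft.mp h⟩)
      rw [hmv, Sum.elim_inr, hbW]
      show mv = (qv hdef₂ f φ b _).getRight _
      rw [getRight_eq h2]
  obtain ⟨k₁, c₁, ψ₁, hc₁, hψ₁⟩ :=
    hdef₁ (nVar v₀) (nPar v₀) (fL v₀) ((qχ hdef₂ f φ).relabel (rL v₀))
  -- classify the parameter slots
  set Pb : Fin (nPar v₀) → Prop := fun j =>
    ∃ jj : Fin n, finSumFinEquiv.symm (((ePar v₀).symm j).1 :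
      Fin (sk hdef₂ f φ + (mDead f + n))) = .inr (Fin.natAdd (mDead f) jj) with hPb
  have slotval : ∀ j : Fin (nPar v₀), ¬ Pb j →
      ∃ i : Fin (sk hdef₂ f φ), finSumFinEquiv.symm (((ePar v₀).symm j).1 :
        Fin (sk hdef₂ f φ + (mDead f + n))) = .inl i := by
    intro j hj
    rcases sumFinCases (finSumFinEquiv.symm (((ePar v₀).symm j).1 :
      Fin (sk hdef₂ f φ + (mDead f + n)))) with ⟨i, hi⟩ | ⟨dj, hdj⟩ | ⟨jj, hjj⟩
    · exact ⟨i, hi⟩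
    · exfalso
      have h2 := ((ePar v₀).symm j).2
      obtain ⟨mv, hmv⟩ := Sum.isRight_iff.mp h2
      have hmv' : qv hdef₂ f φ b₀ (((ePar v₀).symm j).1) = Sum.inr mv := hmv
      rw [qv_at_dead hdef₂ f φ hdj] at hmv'
      cases hmv'
    · exact absurd ⟨jj, hjj⟩ hj
  have slotmem : ∀ j : Fin (nPar v₀), ¬ Pb j → bW b₀ j ∈ C := by
    intro j hj
    obtain ⟨i, hi⟩ := slotval j hj
    have hq : qv hdef₂ f φ b₀ (((ePar v₀).symm j).1) = vc hdef₂ f φ i :=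
      qv_at_c hdef₂ f φ hi
    obtain ⟨mv, hmv⟩ := Sum.isRight_iff.mp (hpat' b₀ _ ((ePar v₀).symm j).2)
    show (qv hdef₂ f φ b₀ (((ePar v₀).symm j).1)).getRight _ ∈ C
    rw [getRight_eq hmv]
    refine vc_inr_mem hdef₂ f φ i mv ?_
    rw [← hq, hmv]
  set eCS : {j : Fin (nPar v₀) // ¬ Pb j} ≃ Fin (Fintype.card {j : Fin (nPar v₀) // ¬ Pb j}) :=
    Fintype.equivFin _ with heCS
  refine ⟨k₁ + Fintype.card {j : Fin (nPar v₀) // ¬ Pb j},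
    Fin.append c₁ (fun t => bW b₀ (eCS.symm t).1),
    ψ₁.relabel (Sum.elim (fun i => .inl (Fin.castAdd _ i))
      (fun j => if h : Pb j then .inr h.choose
        else .inl (Fin.natAdd k₁ (eCS ⟨j, h⟩)))), ?_, ?_⟩
  · intro i
    refine Fin.addCases (motive := fun i => Fin.append c₁ (fun t => bW b₀ (eCS.symm t).1) i ∈ C)
      ?_ ?_ i
    · intro i1
      rw [Fin.append_left]
      exact hc₁ i1
    · intro t
      rw [Fin.append_right]
      exact slotmem (eCS.symm t).1 (eCS.symm t).2
  · intro b
    rw [claim1 b, hψ₁ (bW b), Formula.realize_relabel]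
    refine iff_of_eq (congrArg _ (funext fun s => ?_))
    cases s with
    | inl i =>
      show Sum.elim c₁ (bW b) (.inl i) = _
      rw [Sum.elim_inl]
      show _ = Sum.elim (Fin.append c₁ _) b (.inl (Fin.castAdd _ i))
      rw [Sum.elim_inl, Fin.append_left]
    | inr j =>
      show bW b j = Sum.elim (Fin.append c₁ (fun t => bW b₀ (eCS.symm t).1)) b
        (if h : Pb j then .inr h.choose else .inl (Fin.natAdd k₁ (eCS ⟨j, h⟩)))
      by_cases h : Pb j
      · rw [dif_pos h, Sum.elim_inr]
        have hspec := h.choose_spec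
        have hq : qv hdef₂ f φ b (((ePar v₀).symm j).1) = .inr (b h.choose) :=
          qv_at_b hdef₂ f φ hspec
        show (qv hdef₂ f φ b (((ePar v₀).symm j).1)).getRight _ = b (Exists.choose h)
        rw [getRight_eq hq]
      · rw [dif_neg h, Sum.elim_inl, Fin.append_right]
        have he : eCS.symm (eCS ⟨j, h⟩) = ⟨j, h⟩ := Equiv.symm_apply_apply _ _
        rw [he]
        obtain ⟨i, hi⟩ := slotval j h
        have hqb : qv hdef₂ f φ b (((ePar v₀).symm j).1) = vc hdef₂ f φ i :=
          qv_at_c hdef₂ f φ hi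
        have hqb₀ : qv hdef₂ f φ b₀ (((ePar v₀).symm j).1) = vc hdef₂ f φ i :=
          qv_at_c hdef₂ f φ hi
        obtain ⟨mv, hmv⟩ := Sum.isRight_iff.mp (hpat' b₀ _ ((ePar v₀).symm j).2)
        show (qv hdef₂ f φ b (((ePar v₀).symm j).1)).getRight _ =
          (qv hdef₂ f φ b₀ (((ePar v₀).symm j).1)).getRight _
        rw [getRight_eq (hqb.trans (hqb₀.symm.trans hmv)), getRight_eq hmv]

end Defin

end S10


theorem stmt10 {L : FirstOrder.Language.{v, w}} {M : Type u} [L.Structure M]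
    (κ : Cardinal.{u})
    (hsat : ∀ (J : Type u), #J < κ → ∀ E : Set M, #E < κ →
      ∀ p : GlobalType L M J, ∃ a : J → M, p.RlzOn a E)
    (hhom : ∀ (J J' : Type u), #J < κ → #J' < κ → ∀ E : Set M, #E < κ →
      ∀ (x y : J → M) (w : J' → M), EqTp L x y E →
        ∃ w' : J' → M, EqTp L (Sum.elim x w) (Sum.elim y w') E)
    (hLS : ∀ E : Set M, #E < κ → ∃ S : L.ElementarySubstructure M,
      E ⊆ (S : L.Substructure M) ∧ #((S : L.Substructure M) : Set M) < κ)
    {ι₁ ι₂ : Type u} (hι₁ : #ι₁ < κ) (hι₂ : #ι₂ < κ)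
    (a₁ : ι₁ → M) (a₂ : ι₂ → M) (B C : Set M) (hB : #B < κ) (hC : #C < κ)
    (h₁ : Indep1 L a₁ C B)
    (h₂ : Indep1 L a₂ (C ∪ Set.range a₁) B) :
    Indep1 L (Sum.elim a₂ a₁ : ι₂ ⊕ ι₁ → M) C B := by
  obtain ⟨p₁, hdef₁, hext₁⟩ := h₁
  obtain ⟨p₂, hdef₂, hext₂⟩ := h₂
  refine ⟨⟨fun m n f φ b => S10.qmem hdef₂ p₁ f φ b, ?_, ?_⟩, ?_, ?_⟩
  · exact fun N m n f φ b h => S10.q_finSat hdef₂ hext₁ a₂ N m n f φ b h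
  · exact fun m n f φ b => S10.q_maximal hdef₂ hext₁ f φ b
  · intro m n f φ
    exact S10.q_definable hdef₂ f φ hdef₁
  · intro m n f φ b hb hr
    exact S10.q_extends hdef₂ hext₁ hext₂ f φ b hb hr
end

section
/- In a model K of ACVF, the generic type p_𝒪 of the valuation ring 𝒪 is dominated along the residue map res : 𝒪 → k, and res_* p_𝒪 = p_k: for any parameter set C, x ⊨ p_𝒪|C if and only if res(x) ⊨ p_k|C, i.e., if and only if x ∈ 𝒪 and res(x) ∉ acl^eq(C). -/
/- STATEMENT 16: In a monster model K of ACVF, the generic type p_𝒪 of the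
valuation ring is dominated along the residue map, and res_* p_𝒪 = p_k: for
every (small) parameter set C and x ∈ K,
  x ⊨ p_𝒪|C  (x ∈ 𝒪 and x lies in no acl^eq(C)-definable proper subball of 𝒪)
iff res(x) ⊨ p_k|C, i.e. iff x ∈ 𝒪 and res(x) ∉ acl^eq(C).
Imaginaries (subballs, residues=fibers x+𝔪 of res) are treated via their
automorphism orbits: membership in acl^eq(C) means having finitely many
conjugates under automorphisms fixing C, which is justified by the strong
homogeneity hypothesis `hhomog`. -/

open FirstOrder Cardinal

inductive VFConst : Type | zero | one
inductive VFBin : Type | add | mul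

/-- The language of valued fields: 0, 1, -, +, ·, and a binary divisibility
relation (interpreted as val x ≤ val y). -/
def vfLang : FirstOrder.Language where
  Functions := fun n => match n with
    | 0 => VFConst
    | 1 => Unit
    | 2 => VFBin
    | _ => Empty
  Relations := fun n => match n with
    | 2 => Unit
    | _ => Empty

/-- Balls of K relative to a valuation subring O: additive translates of c·𝒪
(closed balls) and c·𝔪 (open balls). -/
def IsBallO {K : Type*} [Field K] (O : ValuationSubring K) (B : Set K) : Prop :=
  ∃ a c : K, B = {x | ∃ t : O, x = a + c * t} ∨
    B = {x | ∃ t : O, t ∈ IsLocalRing.maximalIdeal O ∧ x = a + c * (t : K)}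

/-- Two tuples from K have the same vfLang-type over E. -/
def EqTpV {K : Type*} [vfLang.Structure K] {n : ℕ} (x y : Fin n → K)
    (E : Set K) : Prop :=
  ∀ (k : ℕ) (φ : vfLang.Formula (Fin n ⊕ Fin k)) (b : Fin k → K),
    (∀ i, b i ∈ E) →
    (φ.Realize (Sum.elim x b) ↔ φ.Realize (Sum.elim y b))

theorem stmt16 {K : Type*} [Field K] [IsAlgClosed K] (O : ValuationSubring K)
    (hnontriv : ∃ x : K, x ≠ 0 ∧ x ∉ O)
    [S : vfLang.Structure K]
    (h0 : Language.Structure.funMap (L := vfLang) (show vfLang.Functions 0 from VFConst.zero) ![] = (0 : K))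
    (h1 : Language.Structure.funMap (L := vfLang) (show vfLang.Functions 0 from VFConst.one) ![] = (1 : K))
    (hneg : ∀ x : K, Language.Structure.funMap (L := vfLang) (show vfLang.Functions 1 from Unit.unit) ![x] = -x)
    (hadd : ∀ x y : K, Language.Structure.funMap (L := vfLang) (show vfLang.Functions 2 from VFBin.add) ![x, y] = x + y)
    (hmul : ∀ x y : K, Language.Structure.funMap (L := vfLang) (show vfLang.Functions 2 from VFBin.mul) ![x, y] = x * y)
    (hdiv : ∀ x y : K, Language.Structure.RelMap (L := vfLang) (show vfLang.Relations 2 from Unit.unit) ![x, y] ↔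
      ∃ t : O, y = (t : K) * x)
    (κ : Cardinal)
    -- strong homogeneity of the monster: tuples with the same type over a
    -- small set are conjugate by an automorphism fixing that set
    (hhomog : ∀ C : Set K, #C < κ → ∀ (n : ℕ) (x y : Fin n → K),
      EqTpV x y C → ∃ σ : K ≃[vfLang] K, (∀ c ∈ C, σ c = c) ∧ ∀ i, σ (x i) = y i) :
    ∀ C : Set K, #C < κ → ∀ x : K,
      ((x ∈ O ∧ ∀ B : Set K, IsBallO O B → B ⊆ (O : Set K) → B ≠ (O : Set K) →
          {T : Set K | ∃ σ : K ≃[vfLang] K,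
            (∀ c ∈ C, σ c = c) ∧ T = σ '' B}.Finite → x ∉ B)
        ↔ (x ∈ O ∧ ¬ {T : Set K | ∃ σ : K ≃[vfLang] K, (∀ c ∈ C, σ c = c) ∧
            T = σ '' {y : K | ∃ t : O,
              t ∈ IsLocalRing.maximalIdeal O ∧ y = x + (t : K)}}.Finite)) := by
  classical
  have h1' : Language.Structure.funMap (L := vfLang) (show vfLang.Functions 0 from VFConst.one) ![] = (1 : K) := h1
  have hneg' : ∀ x : K, Language.Structure.funMap (L := vfLang) (show vfLang.Functions 1 from Unit.unit) ![x] = -x := hneg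
  have hadd' : ∀ x y : K, Language.Structure.funMap (L := vfLang) (show vfLang.Functions 2 from VFBin.add) ![x, y] = x + y := hadd
  have hmul' : ∀ x y : K, Language.Structure.funMap (L := vfLang) (show vfLang.Functions 2 from VFBin.mul) ![x, y] = x * y := hmul
  have hdiv' : ∀ x y : K, Language.Structure.RelMap (L := vfLang) (show vfLang.Relations 2 from Unit.unit) ![x, y] ↔ ∃ t : O, y = (t : K) * x := hdiv
  intro C hC x
  -- P z : z is (the image in K of) an element of the maximal ideal
  set P : K → Prop :=
    fun z => ∃ t : O, t ∈ IsLocalRing.maximalIdeal O ∧ z = (t : K) with hP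
  have hP0 : P 0 := ⟨0, zero_mem _, rfl⟩
  have hPO : ∀ z, P z → z ∈ O := by rintro z ⟨t, _, rfl⟩; exact t.2
  have hPadd : ∀ a b, P a → P b → P (a + b) := by
    rintro _ _ ⟨t, ht, rfl⟩ ⟨s, hs, rfl⟩
    exact ⟨t + s, add_mem ht hs, rfl⟩
  have hPmul : ∀ a b, P a → b ∈ O → P (a * b) := by
    rintro _ b ⟨t, ht, rfl⟩ hb
    exact ⟨t * ⟨b, hb⟩, Ideal.mul_mem_right _ _ ht, rfl⟩
  have hP1 : ¬ P 1 := by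
    rintro ⟨t, ht, h1t⟩
    have : t = 1 := Subtype.ext h1t.symm
    subst this
    exact (IsLocalRing.mem_maximalIdeal 1).1 ht (isUnit_one)
  -- characterization of P
  have hPchar : ∀ a : K, P a ↔ (a ∈ O ∧ ∀ b : K, b ∈ O → a * b ≠ 1) := by
    intro a
    constructor
    · intro ha
      refine ⟨hPO a ha, fun b hb hab => hP1 ?_⟩
      rw [← hab]; exact hPmul a b ha hb
    · rintro ⟨ha, h⟩
      refine ⟨⟨a, ha⟩, ?_, rfl⟩
      rw [IsLocalRing.mem_maximalIdeal, mem_nonunits_iff]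
      intro hu
      obtain ⟨b, hb⟩ := isUnit_iff_exists_inv.1 hu
      have hb2 := congrArg (Subtype.val) hb
      push_cast at hb2
      exact h (b : K) b.2 hb2
  -- automorphism facts
  have hσ1 : ∀ σ : K ≃[vfLang] K, σ 1 = 1 := by
    intro σ
    have h := σ.map_fun ((show vfLang.Functions 0 from VFConst.one)) ![]
    have hc : (σ ∘ (![] : Fin 0 → K)) = ![] := by funext i; exact i.elim0
    rw [hc, h1'] at h
    exact h
  have hσadd : ∀ (σ : K ≃[vfLang] K) (a b : K), σ (a + b) = σ a + σ b := by
    intro σ a b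
    have h := σ.map_fun ((show vfLang.Functions 2 from VFBin.add)) ![a, b]
    have hc : (σ ∘ ![a, b]) = ![σ a, σ b] := by
      funext i; fin_cases i <;> rfl
    rw [hc, hadd' a b, hadd' (σ a) (σ b)] at h
    exact h
  have hσmul : ∀ (σ : K ≃[vfLang] K) (a b : K), σ (a * b) = σ a * σ b := by
    intro σ a b
    have h := σ.map_fun ((show vfLang.Functions 2 from VFBin.mul)) ![a, b]
    have hc : (σ ∘ ![a, b]) = ![σ a, σ b] := by
      funext i; fin_cases i <;> rfl
    rw [hc, hmul' a b, hmul' (σ a) (σ b)] at h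
    exact h
  have hσneg : ∀ (σ : K ≃[vfLang] K) (a : K), σ (-a) = -(σ a) := by
    intro σ a
    have h := σ.map_fun ((show vfLang.Functions 1 from Unit.unit)) ![a]
    have hc : (σ ∘ ![a]) = ![σ a] := by funext i; fin_cases i <;> rfl
    rw [hc, hneg' a, hneg' (σ a)] at h
    exact h
  have hσsub : ∀ (σ : K ≃[vfLang] K) (a b : K), σ (a - b) = σ a - σ b := by
    intro σ a b
    rw [sub_eq_add_neg, hσadd, hσneg, sub_eq_add_neg]
  have hσO : ∀ (σ : K ≃[vfLang] K) (a : K), a ∈ O ↔ σ a ∈ O := by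
    intro σ a
    have h := σ.map_rel ((show vfLang.Relations 2 from Unit.unit)) ![1, a]
    have hc : (σ ∘ ![1, a]) = ![(1 : K), σ a] := by
      funext i; fin_cases i
      · exact hσ1 σ
      · rfl
    rw [hc, hdiv' 1 (σ a), hdiv' 1 a] at h
    simp only [mul_one] at h
    constructor
    · intro ha
      obtain ⟨t, ht⟩ := h.2 ⟨⟨a, ha⟩, rfl⟩
      rw [ht]; exact t.2
    · intro ha
      obtain ⟨t, ht⟩ := h.1 ⟨⟨σ a, ha⟩, rfl⟩
      rw [ht]; exact t.2
  have hσP : ∀ (σ : K ≃[vfLang] K) (a : K), P a ↔ P (σ a) := by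
    intro σ a
    rw [hPchar, hPchar, ← hσO]
    refine and_congr_right fun _ => ?_
    constructor
    · intro h b hb hab
      have hb' : σ.symm b ∈ O := by
        rw [hσO σ, σ.apply_symm_apply]; exact hb
      apply h (σ.symm b) hb'
      have : σ (a * σ.symm b) = 1 := by
        rw [hσmul, σ.apply_symm_apply, hab]
      have h1' : σ (a * σ.symm b) = σ 1 := by rw [this, hσ1]
      exact σ.toEquiv.injective h1'
    · intro h b hb hab
      apply h (σ b) ((hσO σ b).1 hb)
      rw [← hσmul, hab, hσ1]
  -- proper subballs of O are contained in a single coset of the maximal ideal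
  have hPdiff : ∀ B : Set K, IsBallO O B → B ⊆ (O : Set K) → B ≠ (O : Set K) →
      ∀ y ∈ B, ∀ z ∈ B, P (y - z) := by
    rintro B ⟨a, c, hB | hB⟩ hBO hBne y hy z hz
    · -- closed ball a + cO
      have haB : a ∈ B := by rw [hB]; exact ⟨0, by simp⟩
      have haO : a ∈ O := hBO haB
      have hacO : a + c ∈ O := hBO (by rw [hB]; exact ⟨1, by simp⟩)
      have hcO : c ∈ O := by
        have h2 := sub_mem hacO haO
        have h3 : a + c - a = c := by ring
        rwa [h3] at h2
      have hPc : P c := by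
        rw [hPchar]
        refine ⟨hcO, fun b hb hcb => hBne ?_⟩
        apply Set.Subset.antisymm hBO
        intro w hw
        rw [hB]
        refine ⟨⟨b, hb⟩ * (⟨w, hw⟩ - ⟨a, haO⟩), ?_⟩
        push_cast
        rw [← mul_assoc, hcb, one_mul]
        ring
      obtain ⟨t, rfl⟩ := hB ▸ hy
      obtain ⟨s, rfl⟩ := hB ▸ hz
      have : (a + c * t) - (a + c * s) = c * ((t : K) - s) := by ring
      rw [this]
      exact hPmul c _ hPc (sub_mem t.2 s.2)
    · -- open ball a + c𝔪
      have haB : a ∈ B := by rw [hB]; exact ⟨0, zero_mem _, by simp⟩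
      have haO : a ∈ O := hBO haB
      have hcO : c ∈ O := by
        by_contra hc
        apply hBne
        apply Set.Subset.antisymm hBO
        intro w hw
        have hc0 : c ≠ 0 := by rintro rfl; exact hc O.zero_mem
        have hcinv : c⁻¹ ∈ O := (O.mem_or_inv_mem c).resolve_left hc
        have hcinvm : P c⁻¹ := by
          rw [hPchar]
          refine ⟨hcinv, fun b hb hcb => hc ?_⟩
          have hb' : c = b := (inv_mul_eq_one₀ hc0).1 hcb
          rw [hb']; exact hb
        have hP' : P (c⁻¹ * (w - a)) :=
          hPmul _ _ hcinvm (sub_mem hw haO)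
        obtain ⟨t, ht, htv⟩ := hP'
        rw [hB]
        refine ⟨t, ht, ?_⟩
        rw [← htv]
        field_simp
        ring
      obtain ⟨t, ht, rfl⟩ := hB ▸ hy
      obtain ⟨s, hs, rfl⟩ := hB ▸ hz
      have : (a + c * t) - (a + c * s) = ((t : K) - s) * c := by ring
      rw [this]
      exact hPmul _ c ⟨t - s, sub_mem ht hs, rfl⟩ hcO
  -- the fiber of x
  set F : Set K := {y : K | ∃ t : O, t ∈ IsLocalRing.maximalIdeal O ∧ y = x + (t : K)}
    with hF
  have hxF : x ∈ F := ⟨0, zero_mem _, by simp⟩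
  constructor
  · -- forward direction
    rintro ⟨hxO, hball⟩
    refine ⟨hxO, fun hfin => ?_⟩
    have hFball : IsBallO O F := by
      refine ⟨x, 1, Or.inr ?_⟩
      rw [hF]; ext y; simp
    have hFO : F ⊆ (O : Set K) := by
      rintro y ⟨t, ht, rfl⟩
      exact add_mem hxO t.2
    have hFne : F ≠ (O : Set K) := by
      intro hFeq
      have : x + 1 ∈ F := by rw [hFeq]; exact add_mem hxO (one_mem O)
      obtain ⟨t, ht, htv⟩ := this
      have h2 : (1 : K) = (t : K) := by exact add_left_cancel htv
      exact hP1 ⟨t, ht, h2⟩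
    exact hball F hFball hFO hFne hfin hxF
  · -- backward direction
    rintro ⟨hxO, hinf⟩
    refine ⟨hxO, fun B hBball hBO hBne hfin hxB => ?_⟩
    apply hinf
    -- the orbit of F is the image of the orbit of B under "saturate by 𝔪"
    set f : Set K → Set K := fun S => {y : K | ∃ s ∈ S, P (y - s)} with hf
    have key : ∀ σ : K ≃[vfLang] K, f (σ '' B) = σ '' F := by
      intro σ
      ext y
      constructor
      · rintro ⟨s, ⟨b, hb, rfl⟩, hys⟩
        refine ⟨σ.symm y, ?_, σ.apply_symm_apply y⟩
        have h1' : P (σ.symm y - b) := by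
          rw [hσP σ, hσsub, σ.apply_symm_apply]
          exact hys
        have h2' : P (b - x) := hPdiff B hBball hBO hBne b hb x hxB
        have h3' : P (σ.symm y - x) := by
          have := hPadd _ _ h1' h2'
          simpa using this
        obtain ⟨t, ht, htv⟩ := h3'
        exact ⟨t, ht, by rw [← htv]; ring⟩
      · rintro ⟨z, ⟨t, ht, rfl⟩, rfl⟩
        refine ⟨σ x, ⟨x, hxB, rfl⟩, ?_⟩
        have : σ (x + (t : K)) - σ x = σ (t : K) := by
          rw [hσadd]; ring
        rw [this, ← hσP]
        exact ⟨t, ht, rfl⟩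
    have hsub : {T : Set K | ∃ σ : K ≃[vfLang] K, (∀ c ∈ C, σ c = c) ∧ T = σ '' F}
        ⊆ f '' {T : Set K | ∃ σ : K ≃[vfLang] K, (∀ c ∈ C, σ c = c) ∧ T = σ '' B} := by
      rintro T ⟨σ, hσC, rfl⟩
      exact ⟨σ '' B, ⟨σ, hσC, rfl⟩, key σ⟩
    exact Set.Finite.subset (hfin.image f) hsub
end
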